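/- arXiv:1201.2158 — 9 statements merged into one kernel-verified Lean document; each statement's English description precedes it below -/
import Mathlib

section
/- Let 0 < a ≤ 1 and A = {⌊n^{1/a}⌋ : n ∈ ℕ}. Then limsup_{n→∞} a_n/a_{n+1} = 1 (where a_n is the increasing enumeration of A) and the exponential density of A exists and equals a. -/
open Filter

private lemma bern' {x c : ℝ} (hx : 1 ≤ x) (hc : 1 ≤ c) : x ^ c + 1 ≤ (x + 1) ^ c := by
  have hx0 : (0:ℝ) < x := lt_of_lt_of_le one_pos hx
  have h1 : (1 + 1/x) ^ c ≥ 1 + c * (1/x) := by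
    have := one_add_mul_self_le_rpow_one_add (s := 1/x) (by linarith [one_div_nonneg.mpr hx0.le]) hc
    linarith [this]
  have hkey : (x + 1) ^ c = x ^ c * (1 + 1/x) ^ c := by
    rw [← Real.mul_rpow (le_of_lt hx0) (by positivity)]
    field_simp
  rw [hkey]
  have h2 : x ^ c * (1 + c * (1/x)) ≤ x ^ c * (1 + 1/x) ^ c :=
    mul_le_mul_of_nonneg_left h1 (Real.rpow_nonneg hx0.le c)
  refine le_trans ?_ h2
  have h3 : x ^ c * (1 + c * (1/x)) = x ^ c + c * x ^ (c - 1) := by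
    rw [Real.rpow_sub hx0, Real.rpow_one]; field_simp
  rw [h3]
  have h4 : (1:ℝ) ≤ x ^ (c-1) := Real.one_le_rpow hx (by linarith)
  nlinarith

private noncomputable def gg (c : ℝ) (k : ℕ) : ℕ := ⌊((k:ℝ) + 1) ^ c⌋₊

private lemma gg_strictMono {c : ℝ} (hc : 1 ≤ c) : StrictMono (gg c) := by
  apply strictMono_nat_of_lt_succ
  intro k
  have hk1 : (1:ℝ) ≤ (k:ℝ) + 1 := by have := Nat.cast_nonneg (α := ℝ) k; linarith
  have h1 : ((k:ℝ) + 1) ^ c + 1 ≤ ((k:ℝ) + 1 + 1) ^ c := bern' hk1 hc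
  have h2 : (gg c k : ℝ) + 1 ≤ ((k:ℝ) + 1 + 1) ^ c := by
    have := Nat.floor_le (R := ℝ) (a := ((k:ℝ)+1)^c) (by positivity)
    unfold gg; linarith
  have : gg c k + 1 ≤ gg c (k+1) := by
    apply Nat.le_floor
    push_cast
    unfold gg at h2 ⊢
    push_cast at h2 ⊢
    linarith [h2]
  omega

private lemma gg_ge_one {c : ℝ} (hc : 1 ≤ c) (k : ℕ) : 1 ≤ gg c k := by
  apply Nat.le_floor
  have h1 : (1:ℝ) ≤ (k:ℝ) + 1 := by have := Nat.cast_nonneg (α := ℝ) k; linarith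
  have : (1:ℝ) ≤ ((k:ℝ)+1) ^ c := Real.one_le_rpow h1 (by linarith)
  push_cast; linarith

private lemma gg_lb (c : ℝ) (k : ℕ) : ((k:ℝ) + 1) ^ c - 1 < (gg c k : ℝ) := by
  have := Nat.lt_floor_add_one (((k:ℝ)+1)^c)
  unfold gg; linarith

private lemma gg_ub (c : ℝ) (k : ℕ) : (gg c k : ℝ) ≤ ((k:ℝ) + 1) ^ c :=
  Nat.floor_le (by positivity)

private lemma nth_eq_gg (g : ℕ → ℕ) (hg : StrictMono g) (A : Set ℕ)
    (hA : A = Set.range g) : Nat.nth (· ∈ A) = g := by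
  have hinf : (setOf (· ∈ A)).Infinite := by
    show A.Infinite
    rw [hA]
    exact Set.infinite_range_of_injective hg.injective
  have h1 : StrictMono (Nat.nth (· ∈ A)) := Nat.nth_strictMono hinf
  have h2 : Set.range (Nat.nth (· ∈ A)) = Set.range g := by
    rw [Nat.range_nth_of_infinite hinf, Set.setOf_mem_eq, hA]
  exact (StrictMono.range_inj h1 hg).mp h2

private lemma aux_tendsto1 {c : ℝ} (hc : 1 ≤ c) :
    Tendsto (fun n : ℕ => (((n:ℝ)+1)^c - 1) / ((n:ℝ)+1+1)^c) atTop (nhds 1) := by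
  have hc0 : 0 < c := lt_of_lt_of_le one_pos hc
  have hfrac : ∀ n : ℕ, (((n:ℝ)+1)^c - 1) / ((n:ℝ)+1+1)^c
      = (((n:ℝ)+1)/((n:ℝ)+2))^c - 1/((n:ℝ)+2)^c := by
    intro n
    have h2 : ((n:ℝ)+1+1) = ((n:ℝ)+2) := by ring
    rw [h2, sub_div, Real.div_rpow (by positivity) (by positivity)]
  simp only [hfrac]
  have h1 : Tendsto (fun n : ℕ => (((n:ℝ)+1)/((n:ℝ)+2))^c) atTop (nhds 1) := by
    have hb : Tendsto (fun n : ℕ => ((n:ℝ)+1)/((n:ℝ)+2)) atTop (nhds 1) := by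
      have : (fun n : ℕ => ((n:ℝ)+1)/((n:ℝ)+2)) = fun n : ℕ => 1 - 1/((n:ℝ)+2) := by
        funext n; field_simp; ring
      rw [this]
      have h0 : Tendsto (fun n : ℕ => 1/((n:ℝ)+2)) atTop (nhds 0) := by
        apply Tendsto.div_atTop tendsto_const_nhds
        exact tendsto_atTop_add_const_right atTop 2 tendsto_natCast_atTop_atTop
      simpa using tendsto_const_nhds.sub h0
    have := hb.rpow_const (p := c) (Or.inl one_ne_zero)
    simpa using this
  have h2 : Tendsto (fun n : ℕ => 1/((n:ℝ)+2)^c) atTop (nhds 0) := by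
    apply Tendsto.div_atTop tendsto_const_nhds
    apply (tendsto_rpow_atTop hc0).comp
    exact tendsto_atTop_add_const_right atTop 2 tendsto_natCast_atTop_atTop
  simpa using h1.sub h2

private lemma ratio_tendsto {c : ℝ} (hc : 1 ≤ c) :
    Tendsto (fun n : ℕ => (gg c n : ℝ) / (gg c (n+1) : ℝ)) atTop (nhds 1) := by
  apply tendsto_of_tendsto_of_tendsto_of_le_of_le (aux_tendsto1 hc)
    (tendsto_const_nhds : Tendsto (fun _ : ℕ => (1:ℝ)) atTop (nhds 1))
  · intro n
    have hpos : (0:ℝ) < (gg c (n+1) : ℝ) := by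
      exact_mod_cast Nat.lt_of_lt_of_le Nat.zero_lt_one (gg_ge_one hc (n+1))
    have hnum : ((n:ℝ)+1)^c - 1 ≤ (gg c n : ℝ) := (gg_lb c n).le
    have hden : (gg c (n+1) : ℝ) ≤ ((n:ℝ)+1+1)^c := by
      have := gg_ub c (n+1); push_cast at this; linarith
    have hnn : (0:ℝ) ≤ (gg c n : ℝ) := Nat.cast_nonneg _
    exact div_le_div₀ hnn hnum hpos hden
  · intro n
    have hpos : (0:ℝ) < (gg c (n+1) : ℝ) := by
      exact_mod_cast Nat.lt_of_lt_of_le Nat.zero_lt_one (gg_ge_one hc (n+1))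
    rw [div_le_one hpos]
    exact_mod_cast ((gg_strictMono hc).monotone (Nat.le_succ n))

private lemma gg_le_iff {a : ℝ} (ha : 0 < a) (j k : ℕ) :
    gg (1/a) j ≤ k ↔ j + 1 < ⌈((k:ℝ)+1)^a⌉₊ := by
  have h0 : (0:ℝ) ≤ ((j:ℝ)+1) ^ (1/a) := by positivity
  have hstep1 : gg (1/a) j ≤ k ↔ ((j:ℝ)+1) ^ (1/a) < (k:ℝ)+1 := by
    unfold gg
    rw [← Nat.lt_succ_iff, Nat.floor_lt h0]
    push_cast
    rfl
  rw [hstep1, ← Real.rpow_lt_rpow_iff h0 (by positivity) ha]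
  rw [one_div, Real.rpow_inv_rpow (by positivity) (ne_of_gt ha)]
  rw [Nat.lt_ceil]
  push_cast
  rfl

private lemma card_formula {a : ℝ} (ha : 0 < a) (ha1 : a ≤ 1) (A : Set ℕ)
    (hA : A = Set.range (gg (1/a))) (k : ℕ) :
    Nat.card ↥(A ∩ Set.Icc 1 k) = ⌈((k:ℝ)+1)^a⌉₊ - 1 := by
  have hc : 1 ≤ 1/a := by rw [le_div_iff₀ ha]; linarith
  set M := ⌈((k:ℝ)+1)^a⌉₊ with hM
  have hM1 : 1 ≤ M := Nat.one_le_ceil_iff.mpr (by positivity)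
  have hset : A ∩ Set.Icc 1 k = gg (1/a) '' Set.Iio (M - 1) := by
    ext m
    simp only [hA, Set.mem_inter_iff, Set.mem_range, Set.mem_Icc, Set.mem_image, Set.mem_Iio]
    constructor
    · rintro ⟨⟨j, rfl⟩, _, h2⟩
      exact ⟨j, by have := (gg_le_iff ha j k).mp h2; omega, rfl⟩
    · rintro ⟨j, hj, rfl⟩
      exact ⟨⟨j, rfl⟩, gg_ge_one hc j, (gg_le_iff ha j k).mpr (by omega)⟩
  rw [hset, Nat.card_coe_set_eq,
    Set.ncard_image_of_injective _ (gg_strictMono hc).injective,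
    ← Finset.coe_range, Set.ncard_coe_finset, Finset.card_range]

private lemma inv_log_tendsto : Tendsto (fun k : ℕ => (Real.log k)⁻¹) atTop (nhds 0) :=
  (Real.tendsto_log_atTop.comp tendsto_natCast_atTop_atTop).inv_tendsto_atTop

private lemma final_tendsto {a : ℝ} (ha : 0 < a) (ha1 : a ≤ 1) :
    Tendsto (fun k : ℕ => Real.log ((⌈((k:ℝ)+1)^a⌉₊ - 1 : ℕ)) / Real.log k)
      atTop (nhds a) := by
  have hlogk : ∀ᶠ k : ℕ in atTop, (1:ℝ) ≤ Real.log k := by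
    have := Real.tendsto_log_atTop.comp (tendsto_natCast_atTop_atTop (R := ℝ))
    exact this.eventually_ge_atTop 1
  have hka : ∀ᶠ k : ℕ in atTop, (2:ℝ) ≤ (k:ℝ)^a := by
    have : Tendsto (fun k : ℕ => ((k:ℝ))^a) atTop atTop :=
      (tendsto_rpow_atTop ha).comp tendsto_natCast_atTop_atTop
    exact this.eventually_ge_atTop 2
  have hk1 : ∀ᶠ k : ℕ in atTop, 1 ≤ k := eventually_ge_atTop 1
  have hlow : Tendsto (fun k : ℕ => a - Real.log 2 * (Real.log k)⁻¹) atTop (nhds a) := by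
    have := inv_log_tendsto.const_mul (Real.log 2)
    simpa using tendsto_const_nhds.sub this
  have hhigh : Tendsto (fun k : ℕ => a + a * Real.log 2 * (Real.log k)⁻¹) atTop (nhds a) := by
    have := inv_log_tendsto.const_mul (a * Real.log 2)
    simpa using tendsto_const_nhds.add this
  apply tendsto_of_tendsto_of_tendsto_of_le_of_le' hlow hhigh
  · filter_upwards [hlogk, hka, hk1] with k hL hA hK
    have hk0 : (0:ℝ) < (k:ℝ) := by
      have : (1:ℕ) ≤ k := hK; exact_mod_cast Nat.lt_of_lt_of_le Nat.zero_lt_one this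
    have hL0 : (0:ℝ) < Real.log k := lt_of_lt_of_le one_pos hL
    set N : ℕ := ⌈((k:ℝ)+1)^a⌉₊ - 1 with hN
    have hceil1 : 1 ≤ ⌈((k:ℝ)+1)^a⌉₊ := Nat.one_le_ceil_iff.mpr (by positivity)
    have hNval : ((N:ℝ)) = (⌈((k:ℝ)+1)^a⌉₊ : ℝ) - 1 := by
      rw [hN]; push_cast [hceil1]; ring
    have hNlb : (k:ℝ)^a / 2 ≤ (N:ℝ) := by
      have h1 : ((k:ℝ)+1)^a ≤ (⌈((k:ℝ)+1)^a⌉₊ : ℝ) := Nat.le_ceil _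
      have h2 : (k:ℝ)^a ≤ ((k:ℝ)+1)^a := Real.rpow_le_rpow (by positivity) (by linarith) ha.le
      rw [hNval]; linarith
    have hlogN : Real.log ((k:ℝ)^a / 2) ≤ Real.log N :=
      Real.log_le_log (by positivity) hNlb
    have hexp : Real.log ((k:ℝ)^a / 2) = a * Real.log k - Real.log 2 := by
      rw [Real.log_div (by positivity) (by norm_num), Real.log_rpow hk0]
    have key : (a * Real.log k - Real.log 2) / Real.log k ≤ Real.log N / Real.log k := by
      gcongr
      exact hexp ▸ hlogN
    calc a - Real.log 2 * (Real.log ↑k)⁻¹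
        = (a * Real.log k - Real.log 2) / Real.log k := by field_simp
      _ ≤ Real.log N / Real.log k := key
  · filter_upwards [hlogk, hka, hk1] with k hL hA hK
    have hk0 : (0:ℝ) < (k:ℝ) := by
      have : (1:ℕ) ≤ k := hK; exact_mod_cast Nat.lt_of_lt_of_le Nat.zero_lt_one this
    have hk1' : (1:ℝ) ≤ (k:ℝ) := by exact_mod_cast hK
    have hL0 : (0:ℝ) < Real.log k := lt_of_lt_of_le one_pos hL
    set N : ℕ := ⌈((k:ℝ)+1)^a⌉₊ - 1 with hN
    have hceil1 : 1 ≤ ⌈((k:ℝ)+1)^a⌉₊ := Nat.one_le_ceil_iff.mpr (by positivity)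
    have hNval : ((N:ℝ)) = (⌈((k:ℝ)+1)^a⌉₊ : ℝ) - 1 := by
      rw [hN]; push_cast [hceil1]; ring
    have hNpos : (0:ℝ) < (N:ℝ) := by
      have h1 : ((k:ℝ)+1)^a ≤ (⌈((k:ℝ)+1)^a⌉₊ : ℝ) := Nat.le_ceil _
      have h2 : (k:ℝ)^a ≤ ((k:ℝ)+1)^a := Real.rpow_le_rpow (by positivity) (by linarith) ha.le
      rw [hNval]; linarith
    have hNub : (N:ℝ) ≤ (2*(k:ℝ))^a := by
      have h1 : (⌈((k:ℝ)+1)^a⌉₊ : ℝ) < ((k:ℝ)+1)^a + 1 := Nat.ceil_lt_add_one (by positivity)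
      have h2 : ((k:ℝ)+1)^a ≤ (2*(k:ℝ))^a := Real.rpow_le_rpow (by positivity) (by linarith) ha.le
      rw [hNval]; linarith
    have hlogN : Real.log N ≤ a * (Real.log 2 + Real.log k) := by
      have := Real.log_le_log hNpos hNub
      rwa [Real.log_rpow (by positivity), Real.log_mul (by norm_num) (ne_of_gt hk0)] at this
    have key : Real.log N / Real.log k ≤ (a * (Real.log 2 + Real.log k)) / Real.log k := by
      gcongr
    calc Real.log N / Real.log k
        ≤ (a * (Real.log 2 + Real.log k)) / Real.log k := key
      _ = a + a * Real.log 2 * (Real.log ↑k)⁻¹ := by field_simp; ring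

/-- For `0 < a ≤ 1` and `A = {⌊n^(1/a)⌋ : n ≥ 1}`, the upper limit ratio of `A` is `1`
and the exponential density of `A` exists and equals `a`. -/
theorem limit_ratio_and_density_of_floor_pow (a : ℝ) (ha : a ∈ Set.Ioc (0 : ℝ) 1)
    (A : Set ℕ) (hA : A = {m : ℕ | ∃ n : ℕ, 1 ≤ n ∧ m = ⌊(n : ℝ) ^ (1 / a)⌋₊}) :
    limsup (fun n : ℕ =>
        (Nat.nth (· ∈ A) n : ℝ) / (Nat.nth (· ∈ A) (n + 1) : ℝ)) atTop = 1 ∧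
    Tendsto (fun k : ℕ => Real.log (Nat.card ↥(A ∩ Set.Icc 1 k)) / Real.log k)
      atTop (nhds a) := by
  obtain ⟨ha0, ha1⟩ := ha
  have hc : 1 ≤ 1/a := by rw [le_div_iff₀ ha0]; linarith
  have hA' : A = Set.range (gg (1/a)) := by
    rw [hA]
    ext m
    simp only [Set.mem_setOf_eq, Set.mem_range]
    constructor
    · rintro ⟨n, hn, rfl⟩
      refine ⟨n - 1, ?_⟩
      unfold gg
      congr 2
      have : ((n - 1 : ℕ) : ℝ) = (n : ℝ) - 1 := by
        push_cast [hn]; ring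
      rw [this]; ring
    · rintro ⟨j, rfl⟩
      refine ⟨j + 1, le_add_self, ?_⟩
      unfold gg
      congr 2
      push_cast
      ring
  have hnth : Nat.nth (· ∈ A) = gg (1/a) := nth_eq_gg _ (gg_strictMono hc) A hA'
  constructor
  · rw [hnth]
    exact (ratio_tendsto hc).limsup_eq
  · have heq : ∀ k : ℕ, (Nat.card ↥(A ∩ Set.Icc 1 k)) = (⌈((k:ℝ)+1)^a⌉₊ - 1 : ℕ) :=
      card_formula ha0 ha1 A hA'
    simp only [heq]
    exact final_tendsto ha0 ha1
end

section
/- Let A = {2^n : n ∈ ℕ} ∪ {2^{2^N}+1 : N ∈ ℕ}. Then limsup_{n→∞} a_n/a_{n+1} = 1 and the exponential density of A exists and equals 0. -/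
open Filter

namespace LRDZaux

def S : Set ℕ := {m : ℕ | ∃ n : ℕ, 1 ≤ n ∧ m = 2 ^ n} ∪
    {m : ℕ | ∃ N : ℕ, 1 ≤ N ∧ m = 2 ^ 2 ^ N + 1}

lemma pow_mem {n : ℕ} (hn : 1 ≤ n) : 2 ^ n ∈ S := Or.inl ⟨n, hn, rfl⟩

lemma pow_succ_mem {N : ℕ} (hN : 1 ≤ N) : 2 ^ 2 ^ N + 1 ∈ S := Or.inr ⟨N, hN, rfl⟩

lemma two_le {m : ℕ} (hm : m ∈ S) : 2 ≤ m := by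
  rcases hm with ⟨n, hn, rfl⟩ | ⟨N, hN, rfl⟩
  · calc 2 = 2 ^ 1 := rfl
      _ ≤ 2 ^ n := Nat.pow_le_pow_right (by norm_num) hn
  · have : 1 ≤ 2 ^ 2 ^ N := Nat.one_le_two_pow
    omega

lemma two_pow_mod_two {n : ℕ} (hn : 1 ≤ n) : 2 ^ n % 2 = 0 := by
  obtain ⟨k, rfl⟩ := Nat.exists_eq_add_of_le hn
  rw [pow_add, pow_one]
  omega

lemma char {m : ℕ} (hm : m ∈ S) :
    (m % 2 = 0 ∧ m = 2 ^ Nat.log 2 m) ∨ (m % 2 = 1 ∧ m = 2 ^ Nat.log 2 m + 1) := by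
  rcases hm with ⟨n, hn, rfl⟩ | ⟨N, hN, rfl⟩
  · left
    rw [Nat.log_pow one_lt_two]
    exact ⟨two_pow_mod_two hn, rfl⟩
  · right
    have h1 : (1:ℕ) < 2 ^ 2 ^ N := by
      have : 1 ≤ 2 ^ N := Nat.one_le_two_pow
      calc (1:ℕ) < 2 ^ 1 := by norm_num
        _ ≤ 2 ^ 2 ^ N := Nat.pow_le_pow_right (by norm_num) this
    have hlog : Nat.log 2 (2 ^ 2 ^ N + 1) = 2 ^ N := by
      apply Nat.log_eq_of_pow_le_of_lt_pow
      · omega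
      · rw [pow_succ]; omega
    rw [hlog]
    refine ⟨?_, rfl⟩
    have := two_pow_mod_two (Nat.one_le_two_pow (n := N))
    omega

lemma eq_of_log_parity {m₁ m₂ : ℕ} (h₁ : m₁ ∈ S) (h₂ : m₂ ∈ S)
    (hl : Nat.log 2 m₁ = Nat.log 2 m₂) (hp : m₁ % 2 = m₂ % 2) : m₁ = m₂ := by
  rcases char h₁ with ⟨e₁, r₁⟩ | ⟨e₁, r₁⟩ <;> rcases char h₂ with ⟨e₂, r₂⟩ | ⟨e₂, r₂⟩
  · rw [r₁, r₂, hl]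
  · omega
  · omega
  · rw [r₁, r₂, hl]

lemma S_infinite : S.Infinite := by
  apply Set.infinite_of_injective_forall_mem (f := fun n : ℕ => 2 ^ (n + 1))
  · intro a b hab
    simpa using Nat.pow_right_injective (le_refl 2) hab
  · intro n
    exact pow_mem (Nat.succ_le_succ (Nat.zero_le n))

lemma card_bound (k : ℕ) : Nat.card ↥(S ∩ Set.Icc 1 k) ≤ 2 * (Nat.log 2 k + 1) := by
  have hfin : (S ∩ Set.Icc 1 k).Finite := (Set.finite_Icc 1 k).subset Set.inter_subset_right
  have : Finite ↥(S ∩ Set.Icc 1 k) := hfin.to_subtype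
  have hinj : Function.Injective (fun x : ↥(S ∩ Set.Icc 1 k) =>
      ((⟨Nat.log 2 x.1, by
          have hx : (x : ℕ) ≤ k := x.2.2.2
          exact Nat.lt_succ_of_le (Nat.log_mono_right hx)⟩ : Fin (Nat.log 2 k + 1)),
        decide ((x : ℕ) % 2 = 1))) := by
    rintro ⟨m₁, hm₁⟩ ⟨m₂, hm₂⟩ h
    simp only [Prod.mk.injEq, Fin.mk.injEq, decide_eq_decide] at h
    have hpar : m₁ % 2 = m₂ % 2 := by
      rcases Nat.mod_two_eq_zero_or_one m₁ with h1 | h1 <;>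
        rcases Nat.mod_two_eq_zero_or_one m₂ with h2 | h2 <;>
        simp [h1, h2] at h ⊢
    ext
    exact eq_of_log_parity hm₁.1 hm₂.1 h.1 hpar
  calc Nat.card ↥(S ∩ Set.Icc 1 k) ≤ Nat.card (Fin (Nat.log 2 k + 1) × Bool) :=
        Nat.card_le_card_of_injective _ hinj
    _ = 2 * (Nat.log 2 k + 1) := by
        simp [Nat.card_eq_fintype_card]; ring

lemma card_pos {k : ℕ} (hk : 2 ≤ k) : 1 ≤ Nat.card ↥(S ∩ Set.Icc 1 k) := by
  have hfin : (S ∩ Set.Icc 1 k).Finite := (Set.finite_Icc 1 k).subset Set.inter_subset_right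
  have : Finite ↥(S ∩ Set.Icc 1 k) := hfin.to_subtype
  have hne : (2 : ℕ) ∈ S ∩ Set.Icc 1 k := ⟨pow_mem le_rfl, by constructor <;> omega⟩
  have : Nonempty ↥(S ∩ Set.Icc 1 k) := ⟨⟨2, hne⟩⟩
  exact Nat.one_le_iff_ne_zero.2 Nat.card_pos.ne'

lemma density : Tendsto (fun k : ℕ => Real.log (Nat.card ↥(S ∩ Set.Icc 1 k)) / Real.log k)
    atTop (nhds 0) := by
  have h1 : Tendsto (fun x : ℝ => (Real.log 6 + Real.log x) / x) atTop (nhds 0) := by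
    have ha : Tendsto (fun x : ℝ => Real.log 6 / x) atTop (nhds 0) :=
      tendsto_const_nhds.div_atTop tendsto_id
    have hb : Tendsto (fun x : ℝ => Real.log x / x) atTop (nhds 0) :=
      Real.isLittleO_log_id_atTop.tendsto_div_nhds_zero
    have := ha.add hb
    simpa [add_div] using this
  have h2 : Tendsto (fun k : ℕ => Real.log k) atTop atTop :=
    Real.tendsto_log_atTop.comp tendsto_natCast_atTop_atTop
  have hupper : Tendsto (fun k : ℕ => (Real.log 6 + Real.log (Real.log k)) / Real.log k)
      atTop (nhds 0) := h1.comp h2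
  apply tendsto_of_tendsto_of_tendsto_of_le_of_le' tendsto_const_nhds hupper
  · filter_upwards [eventually_ge_atTop 2] with k hk
    have hlogk : 0 < Real.log k := Real.log_pos (by exact_mod_cast hk)
    have hcard : (1:ℝ) ≤ (Nat.card ↥(S ∩ Set.Icc 1 k) : ℝ) := by
      exact_mod_cast card_pos hk
    exact div_nonneg (Real.log_nonneg hcard) hlogk.le
  · filter_upwards [eventually_ge_atTop 3] with k hk
    have hk3 : (3:ℝ) ≤ (k:ℝ) := by exact_mod_cast hk
    have hlogk1 : 1 ≤ Real.log k := by
      rw [Real.le_log_iff_exp_le (by linarith)]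
      calc Real.exp 1 ≤ 2.7182818286 := Real.exp_one_lt_d9.le
        _ ≤ 3 := by norm_num
        _ ≤ (k:ℝ) := hk3
    have hlogk : 0 < Real.log k := by linarith
    set C := Nat.card ↥(S ∩ Set.Icc 1 k) with hC
    have hC1 : (1:ℝ) ≤ (C:ℝ) := by exact_mod_cast card_pos (by omega)
    have hnatlog : (Nat.log 2 k : ℝ) ≤ 2 * Real.log k := by
      have h := Real.natLog_le_logb k 2
      rw [Real.logb] at h
      have hlog2 : (0.6931471803 : ℝ) < Real.log 2 := Real.log_two_gt_d9
      have : Real.log k / Real.log 2 ≤ 2 * Real.log k := by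
        rw [div_le_iff₀ (by linarith)]
        nlinarith
      linarith
    have hC6 : (C:ℝ) ≤ 6 * Real.log k := by
      have hb := card_bound k
      have : (C:ℝ) ≤ 2 * ((Nat.log 2 k : ℝ) + 1) := by exact_mod_cast hb
      nlinarith
    have hlogC : Real.log C ≤ Real.log 6 + Real.log (Real.log k) := by
      calc Real.log C ≤ Real.log (6 * Real.log k) :=
            Real.log_le_log (by linarith) hC6
        _ = Real.log 6 + Real.log (Real.log k) :=
            Real.log_mul (by norm_num) (by linarith)
    gcongr
  
lemma limsup_eq :
    limsup (fun n : ℕ => (Nat.nth (· ∈ S) n : ℝ) / (Nat.nth (· ∈ S) (n + 1) : ℝ)) atTop = 1 := by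
  classical
  set p : ℕ → Prop := (· ∈ S) with hp
  have hinf : (setOf p).Infinite := S_infinite
  have hmem : ∀ n, Nat.nth p n ∈ S := fun n => Nat.nth_mem_of_infinite hinf n
  have hsm : StrictMono (Nat.nth p) := Nat.nth_strictMono hinf
  set f : ℕ → ℝ := fun n => (Nat.nth p n : ℝ) / (Nat.nth p (n + 1) : ℝ) with hf
  have hpos : ∀ n, (0:ℝ) < Nat.nth p n := fun n => by
    have := two_le (hmem n); positivity
  have hle1 : ∀ n, f n ≤ 1 := fun n => by
    rw [div_le_one (hpos (n+1))]
    exact_mod_cast (hsm (Nat.lt_succ_self n)).le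
  have h0 : ∀ n, 0 ≤ f n := fun n => div_nonneg (hpos n).le (hpos (n+1)).le
  -- the special indices
  set d : ℕ → ℕ := fun N => Nat.count p (2 ^ 2 ^ (N + 1)) with hd
  have hmem1 : ∀ N : ℕ, p (2 ^ 2 ^ (N + 1)) := fun N => pow_mem Nat.one_le_two_pow
  have hmem2 : ∀ N : ℕ, p (2 ^ 2 ^ (N + 1) + 1) := fun N =>
    pow_succ_mem (Nat.succ_le_succ (Nat.zero_le N))
  have hval1 : ∀ N, Nat.nth p (d N) = 2 ^ 2 ^ (N + 1) := fun N => Nat.nth_count (hmem1 N)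
  have hcount : ∀ N, Nat.count p (2 ^ 2 ^ (N + 1) + 1) = d N + 1 := fun N => by
    rw [Nat.count_succ, if_pos (hmem1 N)]
  have hval2 : ∀ N, Nat.nth p (d N + 1) = 2 ^ 2 ^ (N + 1) + 1 := fun N => by
    rw [← hcount N]
    exact Nat.nth_count (hmem2 N)
  have hdlt : ∀ N M : ℕ, N < M → d N < d M := by
    intro N M hNM
    have hlt : 2 ^ 2 ^ (N + 1) + 1 ≤ 2 ^ 2 ^ (M + 1) := by
      have h1 : 2 ^ (N + 1) + 1 ≤ 2 ^ (M + 1) := by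
        have h2 : 2 ^ (N + 1) + 1 ≤ 2 ^ (N + 2) := by
          have h3 : 2 ^ (N + 2) = 2 ^ (N + 1) * 2 := pow_succ 2 (N + 1)
          have : (1:ℕ) ≤ 2 ^ (N + 1) := Nat.one_le_two_pow
          omega
        exact le_trans h2 (Nat.pow_le_pow_right (by norm_num) (by omega))
      calc 2 ^ 2 ^ (N + 1) + 1 ≤ 2 ^ (2 ^ (N + 1) + 1) := by
            have h4 : 2 ^ (2 ^ (N + 1) + 1) = 2 ^ 2 ^ (N + 1) * 2 := pow_succ 2 _
            have : (1:ℕ) ≤ 2 ^ 2 ^ (N+1) := Nat.one_le_two_pow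
            omega
        _ ≤ 2 ^ 2 ^ (M + 1) := Nat.pow_le_pow_right (by norm_num) h1
    calc d N < d N + 1 := Nat.lt_succ_self _
      _ = Nat.count p (2 ^ 2 ^ (N + 1) + 1) := (hcount N).symm
      _ ≤ Nat.count p (2 ^ 2 ^ (M + 1)) := Nat.count_monotone p hlt
  have hdtend : Tendsto d atTop atTop := (strictMono_nat_of_lt_succ
    (fun N => hdlt N (N+1) (Nat.lt_succ_self N))).tendsto_atTop
  -- value of f at special indices
  have hfval : ∀ N, f (d N) = (2:ℝ) ^ 2 ^ (N + 1) / ((2:ℝ) ^ 2 ^ (N + 1) + 1) := by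
    intro N
    rw [hf]
    simp only [hval1 N, hval2 N]
    push_cast
    ring
  have hg : Tendsto (fun N : ℕ => (2:ℝ) ^ 2 ^ (N + 1) / ((2:ℝ) ^ 2 ^ (N + 1) + 1))
      atTop (nhds 1) := by
    have ht : Tendsto (fun N : ℕ => (2:ℝ) ^ 2 ^ (N + 1)) atTop atTop := by
      apply (tendsto_pow_atTop_atTop_of_one_lt (by norm_num : (1:ℝ) < 2)).comp
      apply tendsto_atTop_mono (fun N => ?_) tendsto_id
      calc id N ≤ 2 ^ N := (Nat.lt_two_pow_self).le
        _ ≤ 2 ^ (N + 1) := Nat.pow_le_pow_right (by norm_num) (Nat.le_succ N)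
    have hq : Tendsto (fun x : ℝ => x / (x + 1)) atTop (nhds 1) := by
      have h1 : Tendsto (fun x : ℝ => 1 - (x + 1)⁻¹) atTop (nhds 1) := by
        have := tendsto_const_nhds (x := (1:ℝ)) (f := atTop).sub
          ((tendsto_atTop_add_const_right atTop (1:ℝ) tendsto_id).inv_tendsto_atTop)
        simpa using this
      apply h1.congr'
      filter_upwards [eventually_gt_atTop (0:ℝ)] with x hx
      have : x + 1 ≠ 0 := by linarith
      field_simp
      ring
    exact hq.comp ht
  apply le_antisymm
  · exact limsup_le_of_le (isCoboundedUnder_le_of_le atTop h0) (Eventually.of_forall hle1)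
  · apply le_of_forall_lt_imp_le_of_dense
    intro a ha
    apply le_limsup_of_frequently_le _ (isBoundedUnder_of ⟨1, hle1⟩)
    rw [frequently_atTop]
    intro n₀
    have h₁ : ∀ᶠ N in atTop,
        a ≤ (2:ℝ) ^ 2 ^ (N + 1) / ((2:ℝ) ^ 2 ^ (N + 1) + 1) :=
      hg.eventually (eventually_ge_nhds ha)
    have h₂ : ∀ᶠ N in atTop, n₀ ≤ d N := hdtend.eventually_ge_atTop n₀
    obtain ⟨N, hN1, hN2⟩ := (h₁.and h₂).exists
    exact ⟨d N, hN2, by rw [hfval N]; exact hN1⟩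

end LRDZaux

/-- For `A = {2^n : n ≥ 1} ∪ {2^(2^N) + 1 : N ≥ 1}`, the upper limit ratio is `1`
and the exponential density exists and equals `0`. -/
theorem limit_ratio_one_density_zero (A : Set ℕ)
    (hA : A = {m : ℕ | ∃ n : ℕ, 1 ≤ n ∧ m = 2 ^ n} ∪
              {m : ℕ | ∃ N : ℕ, 1 ≤ N ∧ m = 2 ^ 2 ^ N + 1}) :
    limsup (fun n : ℕ =>
        (Nat.nth (· ∈ A) n : ℝ) / (Nat.nth (· ∈ A) (n + 1) : ℝ)) atTop = 1 ∧
    Tendsto (fun k : ℕ => Real.log (Nat.card ↥(A ∩ Set.Icc 1 k)) / Real.log k)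
      atTop (nhds 0) := by
  subst hA
  exact ⟨LRDZaux.limsup_eq, LRDZaux.density⟩
end

section
/- With u_n = (1 + 1/√n)^n, one has u_{n+1} - u_n → +∞ as n → ∞; in particular ⌊u_n⌋ are pairwise distinct for all sufficiently large n. -/
set_option maxHeartbeats 1000000

open Filter

lemma log_taylor (s : ℝ) (h0 : 0 < s) (h1 : s ≤ 1/2) :
    |Real.log (1+s) - (s - s^2/2 + s^3/3)| ≤ 2*s^4 := by
  have hx : |(-s)| < 1 := by rw [abs_neg, abs_of_pos h0]; linarith
  have H := Real.abs_log_sub_add_sum_range_le hx 3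
  rw [abs_neg, abs_of_pos h0] at H
  simp only [Finset.sum_range_succ, Finset.sum_range_zero] at H
  norm_num at H
  have h3 : s^4 / (1-s) ≤ 2*s^4 := by
    rw [div_le_iff₀ (by linarith)]
    nlinarith [pow_pos h0 4]
  have e : Real.log (1+s) - (s - s^2/2 + s^3/3) = -s + s^2/2 + (-s)^3/3 + Real.log (1+s) := by
    ring
  rw [e]
  exact H.trans h3

lemma L_est (n : ℕ) (hn : 400 ≤ n) :
    |(n:ℝ) * Real.log (1 + 1/Real.sqrt n) - (Real.sqrt n - 1/2 + 1/(3*Real.sqrt n))| ≤ 2/(n:ℝ) := by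
  set a := Real.sqrt n with ha
  have hn0 : (0:ℝ) < n := by exact_mod_cast Nat.lt_of_lt_of_le (by norm_num) hn
  have ha2 : a^2 = n := Real.sq_sqrt hn0.le
  have ha20 : 20 ≤ a := by
    have h400 : Real.sqrt 400 ≤ a := Real.sqrt_le_sqrt (by exact_mod_cast hn)
    rwa [show (400:ℝ) = 20^2 by norm_num, Real.sqrt_sq (by norm_num)] at h400
  have ha0 : 0 < a := by linarith
  have hs := log_taylor (1/a) (by positivity) (by rw [div_le_div_iff₀ ha0 (by norm_num)]; linarith)
  have key : (n:ℝ) * Real.log (1+1/a) - (a - 1/2 + 1/(3*a))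
      = a^2 * (Real.log (1+1/a) - (1/a - (1/a)^2/2 + (1/a)^3/3)) := by
    rw [← ha2]; field_simp
  rw [key, abs_mul, abs_of_nonneg (sq_nonneg a)]
  calc a^2 * |Real.log (1+1/a) - (1/a - (1/a)^2/2 + (1/a)^3/3)|
      ≤ a^2 * (2*(1/a)^4) := by gcongr
    _ = 2/(n:ℝ) := by rw [← ha2]; field_simp

lemma delta_ge (n : ℕ) (hn : 400 ≤ n) :
    1/(8*Real.sqrt n) ≤ ((n+1:ℕ):ℝ) * Real.log (1 + 1/Real.sqrt (n+1:ℕ))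
      - (n:ℝ) * Real.log (1 + 1/Real.sqrt n) := by
  have h1 := L_est n hn
  have h2 := L_est (n+1) (by omega)
  set a := Real.sqrt n with ha
  set b := Real.sqrt ((n+1:ℕ):ℝ) with hb
  have hn0 : (0:ℝ) < n := by exact_mod_cast Nat.lt_of_lt_of_le (by norm_num) hn
  have ha2 : a^2 = n := Real.sq_sqrt hn0.le
  have hb2 : b^2 = (n:ℝ)+1 := by
    rw [hb]; push_cast; exact Real.sq_sqrt (by positivity)
  have ha20 : 20 ≤ a := by
    have h400 : Real.sqrt 400 ≤ a := Real.sqrt_le_sqrt (by exact_mod_cast hn)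
    rwa [show (400:ℝ) = 20^2 by norm_num, Real.sqrt_sq (by norm_num)] at h400
  have ha0 : 0 < a := by linarith
  have hab : a ≤ b := by
    rw [ha, hb]; exact Real.sqrt_le_sqrt (by push_cast; linarith)
  have hb0 : 0 < b := lt_of_lt_of_le ha0 hab
  have hba : b ≤ a + 1 := by nlinarith
  have habs1 := abs_le.1 h1
  have habs2 := abs_le.1 h2
  have hcast : ((n+1:ℕ):ℝ) = (n:ℝ)+1 := by push_cast; ring
  rw [hcast] at habs2 ⊢
  -- reduce to the clean inequality
  have main : 1/(8*a) ≤ (b - 1/2 + 1/(3*b) - 2/((n:ℝ)+1)) - (a - 1/2 + 1/(3*a) + 2/(n:ℝ)) := by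
    rw [← hb2, ← ha2]
    have hd : 1 ≤ (b-a)*(2*b) := by nlinarith
    rw [← sub_nonneg]
    have expand : (b - 1/2 + 1/(3*b) - 2/b^2) - (a - 1/2 + 1/(3*a) + 2/a^2) - 1/(8*a)
        = (24*a^3*b^2*(b-a) + 8*a^3*b - 8*a^2*b^2 - 48*a^3 - 48*a*b^2 - 3*a^2*b^2)
          / (24*a^3*b^2) := by
      field_simp
      ring
    rw [expand]
    apply div_nonneg _ (by positivity)
    have p1 : 20*a^3 ≤ a^4 := by nlinarith [mul_nonneg (show (0:ℝ) ≤ a^3 by positivity) (show (0:ℝ) ≤ a - 20 by linarith)]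
    have p2 : 20*a^2 ≤ a^3 := by nlinarith [mul_nonneg (show (0:ℝ) ≤ a^2 by positivity) (show (0:ℝ) ≤ a - 20 by linarith)]
    have p3 : 20*a ≤ a^2 := by nlinarith [mul_nonneg (show (0:ℝ) ≤ a by positivity) (show (0:ℝ) ≤ a - 20 by linarith)]
    nlinarith [mul_le_mul_of_nonneg_left hd (show (0:ℝ) ≤ 12*a^3*b by positivity),
      mul_le_mul_of_nonneg_left hab (show (0:ℝ) ≤ 20*a^3 by positivity), p1, p2, p3]
  linarith [habs1.2, habs2.1]


/-- For `u n = (1 + 1/√n)^n`, the differences `u (n+1) - u n` tend to `+∞`; in particular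
the floors `⌊u n⌋` are pairwise distinct for sufficiently large `n`. -/
theorem diff_tendsto_atTop_and_floors_distinct (u : ℕ → ℝ)
    (hu : ∀ n : ℕ, u n = (1 + 1 / Real.sqrt n) ^ n) :
    Tendsto (fun n => u (n + 1) - u n) atTop atTop ∧
    ∃ N : ℕ, ∀ m n : ℕ, N ≤ m → N ≤ n → ⌊u m⌋₊ = ⌊u n⌋₊ → m = n := by
  have upos : ∀ n : ℕ, 0 < u n := by
    intro n; rw [hu n]; positivity
  have uexp : ∀ n : ℕ, u n = Real.exp ((n:ℝ) * Real.log (1 + 1/Real.sqrt n)) := by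
    intro n
    rw [hu n, Real.exp_nat_mul, Real.exp_log (show (0:ℝ) < 1 + 1/Real.sqrt n by positivity)]
  have key : ∀ n : ℕ, 400 ≤ n → (n:ℝ)/216 ≤ u (n+1) - u n := by
    intro n hn
    have hΔ := delta_ge n hn
    set a := Real.sqrt n with ha
    have hn0 : (0:ℝ) < n := by exact_mod_cast Nat.lt_of_lt_of_le (by norm_num) hn
    have hn400 : (400:ℝ) ≤ n := by exact_mod_cast hn
    have ha2 : a^2 = n := Real.sq_sqrt hn0.le
    have ha20 : 20 ≤ a := by
      have h400 : Real.sqrt 400 ≤ a := Real.sqrt_le_sqrt (by exact_mod_cast hn)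
      rwa [show (400:ℝ) = 20^2 by norm_num, Real.sqrt_sq (by norm_num)] at h400
    have ha0 : 0 < a := by linarith
    set Ln := (n:ℝ) * Real.log (1 + 1/a) with hLndef
    set Lm := ((n+1:ℕ):ℝ) * Real.log (1 + 1/Real.sqrt ((n+1:ℕ):ℝ)) with hLmdef
    have hLn : a - 1 ≤ Ln := by
      have h1 := (abs_le.1 (L_est n hn)).1
      have h2n : 2/(n:ℝ) ≤ 1/2 := by
        rw [div_le_div_iff₀ hn0 (by norm_num)]; linarith
      have h3a : 0 ≤ 1/(3*a) := by positivity
      linarith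
    have e2 : Real.exp Ln * (Real.exp (Lm - Ln) - 1) = Real.exp Lm - Real.exp Ln := by
      rw [mul_sub, mul_one, ← Real.exp_add]
      have h : Ln + (Lm - Ln) = Lm := by ring
      rw [h]
    have e1 : u (n+1) - u n = Real.exp Ln * (Real.exp (Lm - Ln) - 1) := by
      rw [uexp n, uexp (n+1), e2]
    have hmono : Lm - Ln ≤ Real.exp (Lm - Ln) - 1 := by
      linarith [Real.add_one_le_exp (Lm - Ln)]
    have step : Real.exp Ln * (1/(8*a)) ≤ u (n+1) - u n := by
      rw [e1]
      exact mul_le_mul_of_nonneg_left (hΔ.trans hmono) (Real.exp_nonneg _)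
    have hcube : Real.exp (a-1) = Real.exp ((a-1)/3)^3 := by
      rw [← Real.exp_nat_mul]
      congr 1
      push_cast
      ring
    have hexp3 : a^3/27 ≤ Real.exp Ln := by
      have h1 : a/3 ≤ Real.exp ((a-1)/3) := by
        linarith [Real.add_one_le_exp ((a-1)/3)]
      have h2 : (a/3)^3 ≤ Real.exp ((a-1)/3)^3 :=
        pow_le_pow_left₀ (by positivity) h1 3
      have h3 : Real.exp (a-1) ≤ Real.exp Ln := Real.exp_le_exp.2 (by linarith)
      calc a^3/27 = (a/3)^3 := by ring
        _ ≤ Real.exp (a-1) := by rw [hcube]; exact h2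
        _ ≤ Real.exp Ln := h3
    calc (n:ℝ)/216 = (a^3/27) * (1/(8*a)) := by
          rw [← ha2]; field_simp; ring
      _ ≤ Real.exp Ln * (1/(8*a)) := by
          apply mul_le_mul_of_nonneg_right hexp3 (by positivity)
      _ ≤ u (n+1) - u n := step
  constructor
  · have t : Tendsto (fun n : ℕ => (n:ℝ)/216) atTop atTop :=
      tendsto_natCast_atTop_atTop.atTop_div_const (by norm_num)
    refine tendsto_atTop_mono' atTop ?_ t
    filter_upwards [eventually_ge_atTop 400] with n hn using key n hn
  · refine ⟨400, ?_⟩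
    have step1 : ∀ k, 400 ≤ k → ⌊u k⌋₊ < ⌊u (k+1)⌋₊ := by
      intro k hk
      have hk400 : (400:ℝ) ≤ (k:ℝ) := by exact_mod_cast hk
      have h1 : u k + 1 ≤ u (k+1) := by
        have h2 := key k hk
        have : (1:ℝ) ≤ (k:ℝ)/216 := by linarith
        linarith
      have h0 : 0 ≤ u k := (upos k).le
      calc ⌊u k⌋₊ < ⌊u k⌋₊ + 1 := Nat.lt_succ_self _
        _ = ⌊u k + 1⌋₊ := (Nat.floor_add_one h0).symm
        _ ≤ ⌊u (k+1)⌋₊ := Nat.floor_mono h1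
    have mono : ∀ m n : ℕ, 400 ≤ m → m < n → ⌊u m⌋₊ < ⌊u n⌋₊ := by
      intro m n hm hmn
      induction n, hmn using Nat.le_induction with
      | base => exact step1 m hm
      | succ n hn ih => exact ih.trans (step1 n (by omega))
    intro m n hm hn heq
    rcases lt_trichotomy m n with h|h|h
    · exact absurd heq (by have := mono m n hm h; omega)
    · exact h
    · exact absurd heq (by have := mono n m hn h; omega)
end

section
/- If A = {a_1 < a_2 < ...} ⊆ ℕ satisfies liminf_{n→∞} (a_{n+1}-a_n)/a_{n+1} > 0, then limsup_{n→∞} (log n)/(log a_n) = 0. -/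
open Filter

/-- If `liminf gₙ/aₙ₊₁ > 0`, then the exponent of convergence of `A` is `0`. -/
theorem tau_eq_zero_of_liminf_gap_ratio_pos (a : ℕ → ℕ) (hmono : StrictMono a)
    (hpos : ∀ n, 0 < a n)
    (h : 0 < liminf (fun n : ℕ => ((a (n + 1) : ℝ) - (a n : ℝ)) / (a (n + 1) : ℝ)) atTop) :
    limsup (fun n : ℕ => Real.log n / Real.log (a n)) atTop = 0 := by
  set L := liminf (fun n : ℕ => ((a (n + 1) : ℝ) - (a n : ℝ)) / (a (n + 1) : ℝ)) atTop with hL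
  -- choose c with 0 < c < L and c ≤ 1/2
  set c : ℝ := min (L / 2) (1 / 2) with hc
  have hc0 : 0 < c := lt_min (by linarith) (by norm_num)
  have hcL : c < L := lt_of_le_of_lt (min_le_left _ _) (by linarith)
  have hc2 : c ≤ 1 / 2 := min_le_right _ _
  have h1c : (0:ℝ) < 1 - c := by linarith
  set r : ℝ := (1 - c)⁻¹ with hr
  have hr1 : 1 < r := (one_lt_inv₀ h1c).2 (by linarith)
  have hrpos : 0 < r := lt_trans one_pos hr1
  -- cobounded: the ratio is ≤ 1
  have hcob : IsBoundedUnder (· ≥ ·)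
      atTop (fun n : ℕ => ((a (n + 1) : ℝ) - (a n : ℝ)) / (a (n + 1) : ℝ)) := by
    apply Filter.isBoundedUnder_of
    refine ⟨0, fun n => ?_⟩
    have hb : (0:ℝ) < a (n+1) := by exact_mod_cast hpos (n+1)
    have hm : (a n : ℝ) ≤ a (n+1) := by exact_mod_cast (hmono (Nat.lt_succ_self n)).le
    exact div_nonneg (by linarith) hb.le
  have hev : ∀ᶠ n in atTop, c < ((a (n + 1) : ℝ) - (a n : ℝ)) / (a (n + 1) : ℝ) :=
    eventually_lt_of_lt_liminf hcL hcob
  obtain ⟨N, hN⟩ := eventually_atTop.1 hev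
  -- geometric growth: for n ≥ N, r * a n ≤ a (n+1)
  have hstep : ∀ n, N ≤ n → r * (a n : ℝ) ≤ a (n + 1) := by
    intro n hn
    have hb : (0:ℝ) < a (n+1) := by exact_mod_cast hpos (n+1)
    have hrat := hN n hn
    have h1 : c * (a (n+1):ℝ) < (a (n + 1) : ℝ) - (a n : ℝ) :=
      (lt_div_iff₀ hb).1 hrat
    have h2 : (a n : ℝ) < (1 - c) * a (n+1) := by linarith [mul_comm c ((a (n+1)):ℝ)]
    rw [hr, inv_mul_le_iff₀ h1c]
    nlinarith
  have key : ∀ k, (a N : ℝ) * r ^ k ≤ a (N + k) := by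
    intro k
    induction k with
    | zero => simp
    | succ k ih =>
      have h1 : (a N : ℝ) * r ^ (k + 1) = ((a N : ℝ) * r ^ k) * r := by ring
      rw [h1]
      calc ((a N : ℝ) * r ^ k) * r ≤ (a (N + k) : ℝ) * r :=
            mul_le_mul_of_nonneg_right ih hrpos.le
        _ = r * (a (N + k) : ℝ) := mul_comm _ _
        _ ≤ a (N + k + 1) := hstep _ (Nat.le_add_right _ _)
  have hlog : ∀ n, N ≤ n → ((n : ℝ) - N) * Real.log r ≤ Real.log (a n) := by
    intro n hn
    have hk := key (n - N)
    rw [Nat.add_sub_cancel' hn] at hk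
    have haN : (1:ℝ) ≤ a N := by exact_mod_cast hpos N
    have h2 : r ^ (n - N) ≤ (a n : ℝ) :=
      le_trans (le_mul_of_one_le_left (pow_nonneg hrpos.le _) haN) hk
    have h3 : Real.log (r ^ (n - N)) ≤ Real.log (a n) :=
      Real.log_le_log (pow_pos hrpos _) h2
    rw [Real.log_pow] at h3
    rwa [Nat.cast_sub hn] at h3
  have hlogr : 0 < Real.log r := Real.log_pos hr1
  -- the squeeze
  have hub : ∀ᶠ n : ℕ in atTop, Real.log n / Real.log (a n) ≤
      (2 / Real.log r) * (Real.log n / n) := by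
    filter_upwards [eventually_ge_atTop (2 * N + 2)] with n hn
    have hn1 : 1 ≤ n := by omega
    have hnN : N ≤ n := by omega
    have hnp : (0:ℝ) < n := by exact_mod_cast (by omega : 0 < n)
    have hhalf : (n:ℝ) / 2 ≤ (n:ℝ) - N := by
      have : (2 * N + 2 : ℝ) ≤ n := by exact_mod_cast hn
      linarith
    have hla : ((n:ℝ) / 2) * Real.log r ≤ Real.log (a n) :=
      le_trans (mul_le_mul_of_nonneg_right hhalf hlogr.le) (hlog n hnN)
    have hdpos : (0:ℝ) < ((n:ℝ) / 2) * Real.log r := by positivity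
    have hln : 0 ≤ Real.log n := Real.log_nonneg (by exact_mod_cast hn1)
    have h1 : Real.log n / Real.log (a n) ≤ Real.log n / (((n:ℝ) / 2) * Real.log r) :=
      div_le_div_of_nonneg_left hln hdpos hla
    have h2 : Real.log n / (((n:ℝ) / 2) * Real.log r) =
        (2 / Real.log r) * (Real.log n / n) := by
      field_simp
    rw [h2] at h1
    exact h1
  have hlb : ∀ᶠ n : ℕ in atTop, (0:ℝ) ≤ Real.log n / Real.log (a n) := by
    filter_upwards [eventually_ge_atTop 1] with n hn
    have h1 : (1:ℝ) ≤ n := by exact_mod_cast hn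
    have h2 : (1:ℝ) ≤ a n := by exact_mod_cast hpos n
    exact div_nonneg (Real.log_nonneg h1) (Real.log_nonneg h2)
  have htends : Tendsto (fun n : ℕ => Real.log n / Real.log (a n)) atTop (nhds 0) := by
    have hg : Tendsto (fun n : ℕ => (2 / Real.log r) * (Real.log n / n)) atTop (nhds 0) := by
      have := Real.isLittleO_log_id_atTop.tendsto_div_nhds_zero
      have hcomp : Tendsto (fun n : ℕ => Real.log n / n) atTop (nhds 0) :=
        this.comp tendsto_natCast_atTop_atTop
      simpa using hcomp.const_mul (2 / Real.log r)
    exact tendsto_of_tendsto_of_tendsto_of_le_of_le' tendsto_const_nhds hg hlb hub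
  exact htends.limsup_eq
end

section
/- Let A = {a_1 < a_2 < ...} ⊆ ℕ, α = liminf_{n→∞} n(a_{n+1}-a_n)/a_{n+1} and β = limsup_{n→∞} n(a_{n+1}-a_n)/a_n. Then 1/β ≤ liminf (log n)/(log a_n) ≤ limsup (log n)/(log a_n) ≤ 1/α, with the conventions 1/∞ = 0 and 1/0 = ∞. -/
open Filter Topology
open scoped NNReal ENNReal

private lemma edb_log_diff_le (N : ℕ) (hN : 1 ≤ N) :
    Real.log ((N : ℝ) + 1) - Real.log N ≤ 1 / N := by
  have h0 : (0:ℝ) < N := by exact_mod_cast hN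
  have h := Real.log_le_sub_one_of_pos (show (0:ℝ) < ((N:ℝ)+1)/N by positivity)
  rw [Real.log_div (by positivity) h0.ne'] at h
  have he : ((N:ℝ)+1)/N - 1 = 1/N := by field_simp; ring
  linarith

private lemma edb_le_log_diff (N : ℕ) (hN : 2 ≤ N) :
    1 / (N : ℝ) ≤ Real.log N - Real.log ((N : ℝ) - 1) := by
  have h0 : (0:ℝ) < N := by positivity
  have h1 : (0:ℝ) < (N:ℝ) - 1 := by
    have : (2:ℝ) ≤ N := by exact_mod_cast hN
    linarith
  have h := Real.log_le_sub_one_of_pos (show (0:ℝ) < ((N:ℝ)-1)/N by positivity)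
  rw [Real.log_div h1.ne' h0.ne'] at h
  have he : ((N:ℝ)-1)/N - 1 = -(1/N) := by field_simp; ring
  linarith

private lemma edb_sum_lower (L : ℕ → ℝ) (c : ℝ) (hc : 0 ≤ c) (n0 : ℕ) (hn0 : 1 ≤ n0)
    (h : ∀ n, n0 ≤ n → c / n ≤ L (n + 1) - L n) :
    ∀ N, n0 ≤ N → L n0 + c * (Real.log N - Real.log n0) ≤ L N := by
  intro N hN
  induction N, hN using Nat.le_induction with
  | base => simp
  | succ N hN ih =>
    have h1 : 1 ≤ N := le_trans hn0 hN
    have hlog := edb_log_diff_le N h1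
    have h2 := h N hN
    have hmm : c * (Real.log ((N:ℝ)+1) - Real.log N) ≤ c * (1/N) :=
      mul_le_mul_of_nonneg_left hlog hc
    have hcn : c * (1/N) = c / N := by ring
    have e1 : c * (Real.log ((N:ℝ)+1) - Real.log n0)
        = c * (Real.log (N:ℝ) - Real.log n0) + c * (Real.log ((N:ℝ)+1) - Real.log (N:ℝ)) := by
      ring
    push_cast
    linarith

private lemma edb_sum_upper (L : ℕ → ℝ) (s : ℝ) (hs : 0 ≤ s) (n0 : ℕ) (hn0 : 2 ≤ n0)
    (h : ∀ n, n0 ≤ n → L (n + 1) - L n ≤ s / n) :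
    ∀ N, n0 ≤ N → L N ≤ L n0 + s * (Real.log N - Real.log ((n0 : ℝ) - 1)) := by
  have claim : ∀ N, n0 ≤ N → L N ≤ L n0 + s * (Real.log ((N:ℝ) - 1) - Real.log ((n0:ℝ) - 1)) := by
    intro N hN
    induction N, hN using Nat.le_induction with
    | base => simp
    | succ N hN ih =>
      have h1 : 2 ≤ N := le_trans hn0 hN
      have hlog := edb_le_log_diff N h1
      have h2 := h N hN
      have hmm : s * (1/N) ≤ s * (Real.log (N:ℝ) - Real.log ((N:ℝ)-1)) :=
        mul_le_mul_of_nonneg_left hlog hs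
      have hcn : s * (1/N) = s / N := by ring
      have e1 : s * (Real.log (N:ℝ) - Real.log ((n0:ℝ)-1))
          = s * (Real.log ((N:ℝ)-1) - Real.log ((n0:ℝ)-1))
            + s * (Real.log (N:ℝ) - Real.log ((N:ℝ)-1)) := by ring
      have e2 : ((N:ℝ) + 1) - 1 = (N:ℝ) := by ring
      push_cast
      rw [e2]
      linarith
  intro N hN
  have h1 : (0:ℝ) < (N:ℝ) - 1 := by
    have : (2:ℝ) ≤ N := by exact_mod_cast le_trans hn0 hN
    linarith
  have hlog : Real.log ((N:ℝ) - 1) ≤ Real.log N := Real.log_le_log h1 (by linarith)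
  have := claim N hN
  nlinarith [mul_le_mul_of_nonneg_left hlog hs]

private lemma edb_tendsto_aux (c D : ℝ) (hc : 0 < c) :
    Tendsto (fun N : ℕ => Real.log N / (c * Real.log N + D)) atTop (𝓝 (1 / c)) := by
  have hlog : Tendsto (fun N : ℕ => Real.log N) atTop atTop :=
    Real.tendsto_log_atTop.comp tendsto_natCast_atTop_atTop
  have h0 : Tendsto (fun N : ℕ => c + D / Real.log N) atTop (𝓝 (c + 0)) :=
    tendsto_const_nhds.add (tendsto_const_nhds.div_atTop hlog)
  rw [add_zero] at h0
  have h1 := h0.inv₀ hc.ne'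
  rw [← one_div] at h1
  apply h1.congr'
  filter_upwards [hlog.eventually_gt_atTop 0] with N hN
  have he : c + D / Real.log N = (c * Real.log N + D) / Real.log N := by
    field_simp
  rw [he, inv_div]

/-- With `α = liminf n·gₙ/aₙ₊₁` and `β = limsup n·gₙ/aₙ` (in `[0,∞]`), one has
`1/β ≤ ε̲(A) ≤ ε̄(A) ≤ 1/α`, with the conventions `1/∞ = 0`, `1/0 = ∞`. -/
theorem exponential_density_bounds (a : ℕ → ℕ) (hmono : StrictMono a)
    (hpos : ∀ n, 0 < a n) :
    (limsup (fun n : ℕ =>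
        ENNReal.ofReal ((n : ℝ) * (((a (n + 1) : ℝ) - a n) / (a n : ℝ)))) atTop)⁻¹ ≤
      liminf (fun n : ℕ => ENNReal.ofReal (Real.log n / Real.log (a n))) atTop ∧
    liminf (fun n : ℕ => ENNReal.ofReal (Real.log n / Real.log (a n))) atTop ≤
      limsup (fun n : ℕ => ENNReal.ofReal (Real.log n / Real.log (a n))) atTop ∧
    limsup (fun n : ℕ => ENNReal.ofReal (Real.log n / Real.log (a n))) atTop ≤
      (liminf (fun n : ℕ =>
        ENNReal.ofReal ((n : ℝ) * (((a (n + 1) : ℝ) - a n) / (a (n + 1) : ℝ)))) atTop)⁻¹ := by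
  set L : ℕ → ℝ := fun n => Real.log (a n) with hL
  -- basic facts
  have han : ∀ n, n < a n := by
    intro n
    induction n with
    | zero => exact hpos 0
    | succ k ih => exact lt_of_le_of_lt ih (hmono (Nat.lt_succ_self k))
  have hapos : ∀ n, (0:ℝ) < (a n : ℝ) := fun n => by exact_mod_cast hpos n
  have hacast : ∀ n, (a n : ℝ) < a (n+1) := fun n => by
    exact_mod_cast hmono (Nat.lt_succ_self n)
  have hLpos : ∀ n, 1 ≤ n → 0 < L n := by
    intro n hn
    apply Real.log_pos
    have : 1 < a n := lt_of_le_of_lt hn (han n)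
    exact_mod_cast this
  have hLnonneg : ∀ n, 0 ≤ L n := by
    intro n
    apply Real.log_nonneg
    exact_mod_cast hpos n
  have hlow : ∀ n, ((a (n+1) : ℝ) - a n) / (a (n+1) : ℝ) ≤ L (n+1) - L n := by
    intro n
    have h := Real.log_le_sub_one_of_pos (div_pos (hapos n) (hapos (n+1)))
    rw [Real.log_div (hapos n).ne' (hapos (n+1)).ne'] at h
    have he : ((a (n+1) : ℝ) - a n) / (a (n+1) : ℝ) = 1 - (a n : ℝ) / (a (n+1) : ℝ) := by
      rw [sub_div, div_self (hapos (n+1)).ne']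
    rw [he]
    simp only [hL]
    linarith
  have hup : ∀ n, L (n+1) - L n ≤ ((a (n+1) : ℝ) - a n) / (a n : ℝ) := by
    intro n
    have h := Real.log_le_sub_one_of_pos (div_pos (hapos (n+1)) (hapos n))
    rw [Real.log_div (hapos (n+1)).ne' (hapos n).ne'] at h
    have he : ((a (n+1) : ℝ) - a n) / (a n : ℝ) = (a (n+1) : ℝ) / (a n : ℝ) - 1 := by
      rw [sub_div, div_self (hapos n).ne']
    rw [he]
    simp only [hL]
    linarith
  refine ⟨?_, liminf_le_limsup, ?_⟩
  · -- 1/β ≤ liminf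
    apply ENNReal.le_of_forall_nnreal_lt
    intro q hq
    rcases eq_or_ne q 0 with h0 | h0
    · subst h0; simp
    have hq0 : (0:ℝ) < (q : ℝ) := by exact_mod_cast (pos_iff_ne_zero.mpr h0)
    set s : ℝ := (q : ℝ)⁻¹ with hsdef
    have hs : 0 < s := by positivity
    have hβ := ENNReal.lt_inv_iff_lt_inv.mp hq
    have hev := eventually_lt_of_limsup_lt hβ
    have hinv : ((q : ℝ≥0) : ℝ≥0∞)⁻¹ = ENNReal.ofReal s := by
      rw [hsdef, ENNReal.ofReal_inv_of_pos hq0, ENNReal.ofReal_coe_nnreal]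
    rw [hinv] at hev
    rw [eventually_atTop] at hev
    obtain ⟨n0, hn0⟩ := hev
    set n1 := max n0 2 with hn1def
    have hn1two : 2 ≤ n1 := le_max_right _ _
    have hsum : ∀ N, n1 ≤ N → L N ≤ L n1 + s * (Real.log N - Real.log ((n1:ℝ) - 1)) := by
      apply edb_sum_upper L s hs.le n1 hn1two
      intro n hn
      have hnn : (0:ℝ) < n := by
        have : 2 ≤ n := le_trans hn1two hn
        positivity
      have h1 := hn0 n (le_trans (le_max_left _ _) hn)
      have h2 : (n : ℝ) * (((a (n+1) : ℝ) - a n) / (a n : ℝ)) < s :=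
        (ENNReal.ofReal_lt_ofReal_iff hs).mp h1
      have h3 : ((a (n+1) : ℝ) - a n) / (a n : ℝ) < s / n := by
        rw [lt_div_iff₀ hnn]
        linarith [h2]
      exact le_of_lt (lt_of_le_of_lt (hup n) h3)
    set E : ℝ := L n1 with hEdef
    have hten : Tendsto (fun N : ℕ => ENNReal.ofReal (Real.log N / (s * Real.log N + E)))
        atTop (𝓝 (ENNReal.ofReal (1 / s))) :=
      (ENNReal.continuous_ofReal.tendsto _).comp (edb_tendsto_aux s E hs)
    have hq_eq : ENNReal.ofReal (1 / s) = (q : ℝ≥0∞) := by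
      rw [hsdef, one_div, inv_inv, ENNReal.ofReal_coe_nnreal]
    have hle : ∀ᶠ N : ℕ in atTop,
        ENNReal.ofReal (Real.log N / (s * Real.log N + E)) ≤
          ENNReal.ofReal (Real.log N / Real.log (a N)) := by
      filter_upwards [eventually_ge_atTop n1, eventually_ge_atTop 1] with N hN1 hN2
      apply ENNReal.ofReal_le_ofReal
      have hlogN : 0 ≤ Real.log N := Real.log_nonneg (by exact_mod_cast hN2)
      have hLN : 0 < L N := hLpos N hN2
      have hbound : L N ≤ s * Real.log N + E := by
        have := hsum N hN1
        have hlog1 : 0 ≤ Real.log ((n1:ℝ) - 1) := by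
          apply Real.log_nonneg
          have : (2:ℝ) ≤ (n1:ℝ) := by exact_mod_cast hn1two
          linarith
        nlinarith
      have hden : 0 < s * Real.log N + E := lt_of_lt_of_le hLN hbound
      calc Real.log N / (s * Real.log N + E) ≤ Real.log N / L N := by gcongr
        _ = Real.log N / Real.log (a N) := rfl
    calc (q : ℝ≥0∞) = ENNReal.ofReal (1 / s) := hq_eq.symm
      _ = liminf (fun N : ℕ => ENNReal.ofReal (Real.log N / (s * Real.log N + E))) atTop :=
          hten.liminf_eq.symm
      _ ≤ liminf (fun n : ℕ => ENNReal.ofReal (Real.log n / Real.log (a n))) atTop :=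
          liminf_le_liminf hle
  · -- limsup ≤ 1/α
    rw [ENNReal.le_inv_iff_le_inv]
    apply ENNReal.le_of_forall_nnreal_lt
    intro q hq
    rw [ENNReal.le_inv_iff_le_inv]
    rcases eq_or_ne q 0 with h0 | h0
    · subst h0; simp
    have hc : (0:ℝ) < (q : ℝ) := by exact_mod_cast (pos_iff_ne_zero.mpr h0)
    set c : ℝ := (q : ℝ) with hcdef
    have hev := eventually_lt_of_lt_liminf hq
    have hcoe : ((q : ℝ≥0) : ℝ≥0∞) = ENNReal.ofReal c := ENNReal.ofReal_coe_nnreal.symm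
    rw [hcoe] at hev
    rw [eventually_atTop] at hev
    obtain ⟨n0, hn0⟩ := hev
    set n1 := max n0 1 with hn1def
    have hn1one : 1 ≤ n1 := le_max_right _ _
    have hsum : ∀ N, n1 ≤ N → L n1 + c * (Real.log N - Real.log n1) ≤ L N := by
      apply edb_sum_lower L c hc.le n1 hn1one
      intro n hn
      have hnn : (0:ℝ) < n := by
        have : 1 ≤ n := le_trans hn1one hn
        positivity
      have h1 := hn0 n (le_trans (le_max_left _ _) hn)
      have h2 : c < (n : ℝ) * (((a (n+1) : ℝ) - a n) / (a (n+1) : ℝ)) :=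
        (ENNReal.ofReal_lt_ofReal_iff_of_nonneg hc.le).mp h1
      have h3 : c / n < ((a (n+1) : ℝ) - a n) / (a (n+1) : ℝ) := by
        rw [div_lt_iff₀ hnn]
        linarith [h2]
      exact le_of_lt (lt_of_lt_of_le h3 (hlow n))
    set D : ℝ := L n1 - c * Real.log n1 with hDdef
    have hlog : Tendsto (fun N : ℕ => Real.log N) atTop atTop :=
      Real.tendsto_log_atTop.comp tendsto_natCast_atTop_atTop
    have hden : Tendsto (fun N : ℕ => c * Real.log N + D) atTop atTop :=
      tendsto_atTop_add_const_right _ D (hlog.const_mul_atTop hc)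
    have hten : Tendsto (fun N : ℕ => ENNReal.ofReal (Real.log N / (c * Real.log N + D)))
        atTop (𝓝 (ENNReal.ofReal (1 / c))) :=
      (ENNReal.continuous_ofReal.tendsto _).comp (edb_tendsto_aux c D hc)
    have hq_eq : ENNReal.ofReal (1 / c) = ((q : ℝ≥0) : ℝ≥0∞)⁻¹ := by
      rw [one_div, ENNReal.ofReal_inv_of_pos hc, hcoe]
    have hle : ∀ᶠ N : ℕ in atTop,
        ENNReal.ofReal (Real.log N / Real.log (a N)) ≤
          ENNReal.ofReal (Real.log N / (c * Real.log N + D)) := by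
      filter_upwards [eventually_ge_atTop n1, eventually_ge_atTop 1,
        hden.eventually_gt_atTop 0] with N hN1 hN2 hN3
      apply ENNReal.ofReal_le_ofReal
      have hlogN : 0 ≤ Real.log N := Real.log_nonneg (by exact_mod_cast hN2)
      have hbound : c * Real.log N + D ≤ L N := by
        have := hsum N hN1
        rw [hDdef]
        linarith
      calc Real.log N / Real.log (a N) = Real.log N / L N := rfl
        _ ≤ Real.log N / (c * Real.log N + D) := by gcongr
    calc limsup (fun n : ℕ => ENNReal.ofReal (Real.log n / Real.log (a n))) atTop
        ≤ limsup (fun N : ℕ => ENNReal.ofReal (Real.log N / (c * Real.log N + D))) atTop :=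
          limsup_le_limsup hle
      _ = ENNReal.ofReal (1 / c) := hten.limsup_eq
      _ = ((q : ℝ≥0) : ℝ≥0∞)⁻¹ := hq_eq
end

section
/- Let A = {a_1 < a_2 < ...} ⊆ ℕ. If liminf n(a_{n+1}-a_n)/a_{n+1} = limsup n(a_{n+1}-a_n)/a_n = c ∈ (0,∞], then (log n)/(log a_n) converges to 1/c (with 1/∞ = 0). -/
open Filter Finset

private lemma pt_upper (k : ℕ) :
    Real.log ((k : ℝ) + 1 + 1) - Real.log ((k : ℝ) + 1) ≤ 1 / ((k : ℝ) + 1) := by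
  have h1 : (0:ℝ) < (k:ℝ) + 1 := by positivity
  have h2 : (0:ℝ) < (k:ℝ) + 1 + 1 := by positivity
  have h := Real.log_le_sub_one_of_pos (x := ((k:ℝ) + 1 + 1) / ((k:ℝ) + 1)) (by positivity)
  rw [Real.log_div h2.ne' h1.ne'] at h
  have e : ((k:ℝ) + 1 + 1) / ((k:ℝ) + 1) - 1 = 1 / ((k:ℝ) + 1) := by field_simp; ring
  linarith [e ▸ h]

private lemma pt_lower (k : ℕ) (hk : 1 ≤ k) :
    1 / ((k : ℝ) + 1) ≤ Real.log ((k : ℝ) + 1) - Real.log (k : ℝ) := by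
  have hk0 : (0:ℝ) < (k:ℝ) := by exact_mod_cast hk
  have h1 : (0:ℝ) < (k:ℝ) + 1 := by positivity
  have h := Real.log_le_sub_one_of_pos (x := (k:ℝ) / ((k:ℝ) + 1)) (by positivity)
  rw [Real.log_div hk0.ne' h1.ne'] at h
  have e : (k:ℝ) / ((k:ℝ) + 1) - 1 = -(1 / ((k:ℝ) + 1)) := by field_simp; ring
  linarith [e ▸ h]

private lemma harmonic_lower (N : ℕ) : ∀ n, N ≤ n →
    Real.log ((n:ℝ) + 1) - Real.log ((N:ℝ) + 1) ≤ ∑ k ∈ Finset.Ico N n, 1 / ((k:ℝ) + 1) := by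
  intro n hn
  induction n, hn using Nat.le_induction with
  | base => simp
  | succ n hn ih =>
    rw [Finset.sum_Ico_succ_top hn]
    have h := pt_upper n
    push_cast
    linarith

private lemma harmonic_upper (N : ℕ) (hN : 1 ≤ N) : ∀ n, N ≤ n →
    ∑ k ∈ Finset.Ico N n, 1 / ((k:ℝ) + 1) ≤ Real.log (n:ℝ) - Real.log (N:ℝ) := by
  intro n hn
  induction n, hn using Nat.le_induction with
  | base => simp
  | succ n hn ih =>
    rw [Finset.sum_Ico_succ_top hn]
    have h := pt_lower n (le_trans hN hn)
    push_cast
    linarith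

private lemma log_nat_tendsto : Tendsto (fun n : ℕ => Real.log n) atTop atTop :=
  Real.tendsto_log_atTop.comp tendsto_natCast_atTop_atTop

private lemma lower_aux (u : ℕ → ℝ) (hu : ∀ k, 0 ≤ u k) (m : ℝ) (hm : 0 ≤ m)
    (h : ∀ᶠ k : ℕ in atTop, m ≤ ((k:ℝ) + 1) * u k) (b : ℝ) (hb : b < m) :
    ∀ᶠ n in atTop, b < (∑ k ∈ Finset.range n, u k) / Real.log n := by
  obtain ⟨N, hN⟩ := eventually_atTop.1 h
  have hg : Tendsto (fun n : ℕ => m - m * Real.log ((N:ℝ) + 1) / Real.log n) atTop (nhds m) := by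
    have h0 : Tendsto (fun n : ℕ => m * Real.log ((N:ℝ) + 1) / Real.log n) atTop (nhds 0) :=
      Tendsto.div_atTop tendsto_const_nhds log_nat_tendsto
    simpa using tendsto_const_nhds.sub h0
  have hgb : ∀ᶠ n : ℕ in atTop, b < m - m * Real.log ((N:ℝ) + 1) / Real.log n :=
    hg.eventually (eventually_gt_nhds hb)
  filter_upwards [hgb, eventually_ge_atTop N, eventually_ge_atTop 2] with n h1 h2 h3
  have hn1 : (1:ℝ) < (n:ℝ) := by exact_mod_cast h3
  have hlog : 0 < Real.log (n:ℝ) := Real.log_pos hn1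
  refine h1.trans_le ?_
  have s0 : m * (Real.log ((n:ℝ) + 1) - Real.log ((N:ℝ) + 1)) ≤
      ∑ k ∈ Finset.Ico N n, u k := by
    calc m * (Real.log ((n:ℝ) + 1) - Real.log ((N:ℝ) + 1))
        ≤ m * ∑ k ∈ Finset.Ico N n, 1 / ((k:ℝ) + 1) :=
          mul_le_mul_of_nonneg_left (harmonic_lower N n h2) hm
      _ = ∑ k ∈ Finset.Ico N n, m / ((k:ℝ) + 1) := by
          rw [Finset.mul_sum]; exact Finset.sum_congr rfl fun k _ => by ring
      _ ≤ ∑ k ∈ Finset.Ico N n, u k := by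
          refine Finset.sum_le_sum fun k hk => ?_
          have hk1 : (0:ℝ) < (k:ℝ) + 1 := by positivity
          have := hN k (Finset.mem_Ico.1 hk).1
          rw [div_le_iff₀ hk1]
          linarith [this, mul_comm ((k:ℝ) + 1) (u k)]
  have s2 : ∑ k ∈ Finset.Ico N n, u k ≤ ∑ k ∈ Finset.range n, u k := by
    refine Finset.sum_le_sum_of_subset_of_nonneg ?_ fun i _ _ => hu i
    intro x hx
    exact Finset.mem_range.2 (Finset.mem_Ico.1 hx).2
  have hmono : Real.log (n:ℝ) ≤ Real.log ((n:ℝ) + 1) :=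
    Real.log_le_log (by positivity) (by linarith)
  have key : m * Real.log (n:ℝ) - m * Real.log ((N:ℝ) + 1) ≤ ∑ k ∈ Finset.range n, u k := by
    nlinarith [mul_le_mul_of_nonneg_left hmono hm]
  calc m - m * Real.log ((N:ℝ) + 1) / Real.log (n:ℝ)
      = (m * Real.log (n:ℝ) - m * Real.log ((N:ℝ) + 1)) / Real.log (n:ℝ) := by
        field_simp
    _ ≤ (∑ k ∈ Finset.range n, u k) / Real.log (n:ℝ) := by gcongr

private lemma upper_aux (u : ℕ → ℝ) (hu : ∀ k, 0 ≤ u k) (m : ℝ) (hm : 0 ≤ m)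
    (h : ∀ᶠ k : ℕ in atTop, ((k:ℝ) + 1) * u k ≤ m) (b : ℝ) (hb : m < b) :
    ∀ᶠ n in atTop, (∑ k ∈ Finset.range n, u k) / Real.log n < b := by
  obtain ⟨N₀, hN₀⟩ := eventually_atTop.1 h
  set N := max N₀ 1 with hNdef
  have hN1 : 1 ≤ N := le_max_right _ _
  have hN : ∀ k, N ≤ k → ((k:ℝ) + 1) * u k ≤ m := fun k hk =>
    hN₀ k (le_trans (le_max_left _ _) hk)
  set C : ℝ := (∑ k ∈ Finset.range N, u k) - m * Real.log (N:ℝ) with hCdef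
  have hg : Tendsto (fun n : ℕ => C / Real.log n + m) atTop (nhds m) := by
    have h0 : Tendsto (fun n : ℕ => C / Real.log n) atTop (nhds 0) :=
      Tendsto.div_atTop tendsto_const_nhds log_nat_tendsto
    simpa using h0.add tendsto_const_nhds
  have hgb : ∀ᶠ n : ℕ in atTop, C / Real.log n + m < b :=
    hg.eventually (eventually_lt_nhds hb)
  filter_upwards [hgb, eventually_ge_atTop N, eventually_ge_atTop 2] with n h1 h2 h3
  have hn1 : (1:ℝ) < (n:ℝ) := by exact_mod_cast h3
  have hlog : 0 < Real.log (n:ℝ) := Real.log_pos hn1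
  refine lt_of_le_of_lt ?_ h1
  have ssplit : ∑ k ∈ Finset.range n, u k =
      (∑ k ∈ Finset.range N, u k) + ∑ k ∈ Finset.Ico N n, u k := by
    rw [Finset.range_eq_Ico, Finset.range_eq_Ico]
    exact (Finset.sum_Ico_consecutive u (Nat.zero_le N) h2).symm
  have s1 : ∑ k ∈ Finset.Ico N n, u k ≤ m * (Real.log (n:ℝ) - Real.log (N:ℝ)) := by
    calc ∑ k ∈ Finset.Ico N n, u k
        ≤ ∑ k ∈ Finset.Ico N n, m / ((k:ℝ) + 1) := by
          refine Finset.sum_le_sum fun k hk => ?_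
          have hk1 : (0:ℝ) < (k:ℝ) + 1 := by positivity
          have := hN k (Finset.mem_Ico.1 hk).1
          rw [le_div_iff₀ hk1]
          linarith [mul_comm (u k) ((k:ℝ) + 1)]
      _ = m * ∑ k ∈ Finset.Ico N n, 1 / ((k:ℝ) + 1) := by
          rw [Finset.mul_sum]; exact Finset.sum_congr rfl fun k _ => by ring
      _ ≤ m * (Real.log (n:ℝ) - Real.log (N:ℝ)) :=
          mul_le_mul_of_nonneg_left (harmonic_upper N hN1 n h2) hm
  have key : ∑ k ∈ Finset.range n, u k ≤ C + m * Real.log (n:ℝ) := by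
    rw [ssplit, hCdef]; linarith
  calc (∑ k ∈ Finset.range n, u k) / Real.log (n:ℝ)
      ≤ (C + m * Real.log (n:ℝ)) / Real.log (n:ℝ) := by gcongr
    _ = C / Real.log (n:ℝ) + m := by field_simp

private lemma cesaro_log_fin (u : ℕ → ℝ) (hu : ∀ k, 0 ≤ u k) (l : ℝ) (hl : 0 ≤ l)
    (h : Tendsto (fun n : ℕ => ((n:ℝ) + 1) * u n) atTop (nhds l)) :
    Tendsto (fun n : ℕ => (∑ k ∈ Finset.range n, u k) / Real.log n) atTop (nhds l) := by
  refine tendsto_order.2 ⟨fun b hb => ?_, fun b hb => ?_⟩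
  · rcases lt_or_ge b 0 with hb0 | hb0
    · refine lower_aux u hu 0 le_rfl ?_ b hb0
      exact Eventually.of_forall fun k => mul_nonneg (by positivity) (hu k)
    · have hml : (l + b) / 2 < l := by linarith
      refine lower_aux u hu ((l + b) / 2) (by linarith) ?_ b (by linarith)
      exact h.eventually (eventually_ge_nhds hml)
  · have hml : l < (l + b) / 2 := by linarith
    refine upper_aux u hu ((l + b) / 2) (by linarith) ?_ b (by linarith)
    exact h.eventually (eventually_le_nhds hml)

private lemma cesaro_log_inf (u : ℕ → ℝ) (hu : ∀ k, 0 ≤ u k)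
    (h : Tendsto (fun n : ℕ => ((n:ℝ) + 1) * u n) atTop atTop) :
    Tendsto (fun n : ℕ => (∑ k ∈ Finset.range n, u k) / Real.log n) atTop atTop := by
  rw [tendsto_atTop]
  intro b
  have hb : b < max b 0 + 1 := by
    have := le_max_left b 0; linarith
  have := lower_aux u hu (max b 0 + 1) (by have := le_max_right b 0; linarith) (h.eventually_ge_atTop _) b hb
  exact this.mono fun n hn => hn.le

/-- If `liminf n·gₙ/aₙ₊₁ = limsup n·gₙ/aₙ = c ∈ (0,∞]`, then `log n / log aₙ → 1/c`
(with `1/∞ = 0`). -/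
theorem exponential_density_of_eq (a : ℕ → ℕ) (hmono : StrictMono a)
    (hpos : ∀ n, 0 < a n) (c : ENNReal) (hc : 0 < c)
    (hα : liminf (fun n : ℕ =>
        ENNReal.ofReal ((n : ℝ) * (((a (n + 1) : ℝ) - a n) / (a (n + 1) : ℝ)))) atTop = c)
    (hβ : limsup (fun n : ℕ =>
        ENNReal.ofReal ((n : ℝ) * (((a (n + 1) : ℝ) - a n) / (a n : ℝ)))) atTop = c) :
    Tendsto (fun n : ℕ => ENNReal.ofReal (Real.log n / Real.log (a n))) atTop (nhds c⁻¹) := by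
  have hA : ∀ n, (0:ℝ) < (a n : ℝ) := fun n => by exact_mod_cast hpos n
  have hAB : ∀ n, (a n : ℝ) < (a (n+1) : ℝ) := fun n => by
    exact_mod_cast hmono (Nat.lt_succ_self n)
  set L : ℕ → ℝ := fun n => Real.log (a (n+1) : ℝ) - Real.log (a n : ℝ) with hLdef
  have hLpos : ∀ n, 0 ≤ L n := fun n =>
    sub_nonneg.2 (Real.log_le_log (hA n) (hAB n).le)
  have ineq1 : ∀ n : ℕ, (n:ℝ) * (((a (n+1):ℝ) - a n) / (a (n+1):ℝ)) ≤ (n:ℝ) * L n := by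
    intro n
    refine mul_le_mul_of_nonneg_left ?_ (Nat.cast_nonneg n)
    have hBne := (hA (n+1)).ne'
    have h := Real.log_le_sub_one_of_pos (x := (a n : ℝ) / (a (n+1) : ℝ))
      (div_pos (hA n) (hA (n+1)))
    rw [Real.log_div (hA n).ne' hBne] at h
    have e : (a n : ℝ) / (a (n+1) : ℝ) - 1 = -(((a (n+1):ℝ) - a n) / (a (n+1):ℝ)) := by
      field_simp; ring
    rw [e] at h
    show ((a (n+1):ℝ) - a n) / (a (n+1):ℝ) ≤ Real.log (a (n+1) : ℝ) - Real.log (a n : ℝ)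
    linarith
  have ineq2 : ∀ n : ℕ, (n:ℝ) * L n ≤ (n:ℝ) * (((a (n+1):ℝ) - a n) / (a n:ℝ)) := by
    intro n
    refine mul_le_mul_of_nonneg_left ?_ (Nat.cast_nonneg n)
    have hAne := (hA n).ne'
    have h := Real.log_le_sub_one_of_pos (x := (a (n+1) : ℝ) / (a n : ℝ))
      (div_pos (hA (n+1)) (hA n))
    rw [Real.log_div (hA (n+1)).ne' hAne] at h
    have e : (a (n+1) : ℝ) / (a n : ℝ) - 1 = ((a (n+1):ℝ) - a n) / (a n:ℝ) := by
      field_simp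
    rw [e] at h
    show Real.log (a (n+1) : ℝ) - Real.log (a n : ℝ) ≤ ((a (n+1):ℝ) - a n) / (a n:ℝ)
    linarith
  set αf : ℕ → ENNReal := fun n =>
    ENNReal.ofReal ((n : ℝ) * (((a (n + 1) : ℝ) - a n) / (a (n + 1) : ℝ))) with hαf
  set βf : ℕ → ENNReal := fun n =>
    ENNReal.ofReal ((n : ℝ) * (((a (n + 1) : ℝ) - a n) / (a n : ℝ))) with hβf
  have hαβ : ∀ n, αf n ≤ βf n := fun n =>
    ENNReal.ofReal_le_ofReal ((ineq1 n).trans (ineq2 n))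
  have hlimsupα : limsup αf atTop = c := by
    refine le_antisymm ?_ ?_
    · rw [← hβ]
      exact limsup_le_limsup (Eventually.of_forall hαβ)
    · rw [← hα]
      exact liminf_le_limsup
  have hliminfβ : liminf βf atTop = c := by
    refine le_antisymm ?_ ?_
    · rw [← hβ]
      exact liminf_le_limsup
    · rw [← hα]
      exact liminf_le_liminf (Eventually.of_forall hαβ)
  have htα : Tendsto αf atTop (nhds c) := tendsto_of_liminf_eq_limsup hα hlimsupα
  have htβ : Tendsto βf atTop (nhds c) := tendsto_of_liminf_eq_limsup hliminfβ hβ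
  have hγ : Tendsto (fun n : ℕ => ENNReal.ofReal ((n:ℝ) * L n)) atTop (nhds c) :=
    tendsto_of_tendsto_of_tendsto_of_le_of_le htα htβ
      (fun n => ENNReal.ofReal_le_ofReal (ineq1 n)) (fun n => ENNReal.ofReal_le_ofReal (ineq2 n))
  have hlogsum : ∀ n, ∑ k ∈ Finset.range n, L k = Real.log (a n : ℝ) - Real.log (a 0 : ℝ) :=
    fun n => Finset.sum_range_sub (fun k => Real.log (a k : ℝ)) n
  rcases eq_or_ne c ⊤ with hctop | hne
  · -- infinite case
    have hreal : Tendsto (fun n : ℕ => (n:ℝ) * L n) atTop atTop := by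
      rw [tendsto_atTop]
      intro b
      obtain ⟨M, hM⟩ := exists_nat_ge b
      have hev := (ENNReal.tendsto_nhds_top_iff_nat.1 (hctop ▸ hγ)) M
      filter_upwards [hev] with n hn
      have hMn : (M:ℝ) < (n:ℝ) * L n := by
        by_contra hcon
        push_neg at hcon
        have h1 : ENNReal.ofReal ((n:ℝ) * L n) ≤ (M : ENNReal) := by
          rw [← ENNReal.ofReal_natCast M]
          exact ENNReal.ofReal_le_ofReal hcon
        exact absurd hn (not_lt.2 h1)
      linarith
    have h1 : Tendsto (fun n : ℕ => ((n:ℝ) + 1) * L n) atTop atTop := by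
      refine tendsto_atTop_mono (fun n => ?_) hreal
      nlinarith [hLpos n]
    have h2 := cesaro_log_inf L hLpos h1
    have h3 : Tendsto (fun n : ℕ => Real.log (a n : ℝ) / Real.log n) atTop atTop := by
      have hz : Tendsto (fun n : ℕ => Real.log (a 0 : ℝ) / Real.log n) atTop (nhds 0) :=
        Tendsto.div_atTop tendsto_const_nhds log_nat_tendsto
      have hadd := h2.atTop_add hz
      refine hadd.congr fun n => ?_
      rw [hlogsum n, ← add_div, sub_add_cancel]
    have h4 : Tendsto (fun n : ℕ => Real.log n / Real.log (a n : ℝ)) atTop (nhds 0) := by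
      have := h3.inv_tendsto_atTop
      refine this.congr fun n => ?_
      rw [Pi.inv_apply, inv_div]
    have h5 := (ENNReal.continuous_ofReal.tendsto 0).comp h4
    simpa [hctop, Function.comp_def] using h5
  · -- finite case
    set l := c.toReal with hldef
    have hl0 : 0 < l := ENNReal.toReal_pos hc.ne' hne
    have hreal : Tendsto (fun n : ℕ => (n:ℝ) * L n) atTop (nhds l) := by
      have h1 := (ENNReal.tendsto_toReal hne).comp hγ
      refine h1.congr fun n => ?_
      exact ENNReal.toReal_ofReal (mul_nonneg (Nat.cast_nonneg n) (hLpos n))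
    have hLto0 : Tendsto L atTop (nhds 0) := by
      have hinv : Tendsto (fun n : ℕ => ((n:ℝ))⁻¹) atTop (nhds 0) :=
        tendsto_inv_atTop_zero.comp tendsto_natCast_atTop_atTop
      have hmul := hreal.mul hinv
      rw [mul_zero] at hmul
      refine hmul.congr' ?_
      filter_upwards [eventually_ge_atTop 1] with n hn
      have hn0 : (n:ℝ) ≠ 0 := by
        have : (0:ℝ) < n := by exact_mod_cast hn
        exact this.ne'
      field_simp
    have h1 : Tendsto (fun n : ℕ => ((n:ℝ) + 1) * L n) atTop (nhds l) := by
      have hadd := hreal.add hLto0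
      rw [add_zero] at hadd
      refine hadd.congr fun n => ?_
      ring
    have h2 := cesaro_log_fin L hLpos l hl0.le h1
    have h3 : Tendsto (fun n : ℕ => Real.log (a n : ℝ) / Real.log n) atTop (nhds l) := by
      have hz : Tendsto (fun n : ℕ => Real.log (a 0 : ℝ) / Real.log n) atTop (nhds 0) :=
        Tendsto.div_atTop tendsto_const_nhds log_nat_tendsto
      have hadd := h2.add hz
      rw [add_zero] at hadd
      refine hadd.congr fun n => ?_
      rw [hlogsum n, ← add_div, sub_add_cancel]
    have h4 : Tendsto (fun n : ℕ => Real.log n / Real.log (a n : ℝ)) atTop (nhds l⁻¹) := by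
      have := h3.inv₀ hl0.ne'
      refine this.congr fun n => ?_
      rw [inv_div]
    have h5 := (ENNReal.continuous_ofReal.tendsto _).comp h4
    have he : ENNReal.ofReal l⁻¹ = c⁻¹ := by
      rw [ENNReal.ofReal_inv_of_pos hl0, ENNReal.ofReal_toReal hne]
    rw [← he]
    exact h5
end

section
/- Let α ≥ 1 be real. If there exists a sequence (e_n) tending to 0 such that for all n ≥ 1, (a_{n+1}-a_n)/a_{n+1} ≥ (α/n)(1+e_n), then limsup_{n→∞} (log n)/(log a_n) ≤ 1/α. -/
open Filter

/-- If `gₙ/aₙ₊₁ ≥ (α/n)(1+eₙ)` for all `n ≥ 1` with `eₙ → 0` and `α ≥ 1`, then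
the upper exponential density of `A` is at most `1/α`. -/
theorem upper_density_le_of_gap_lower_bound (a : ℕ → ℕ) (hmono : StrictMono a)
    (hpos : ∀ n, 0 < a n) (α : ℝ) (hα : 1 ≤ α) (e : ℕ → ℝ)
    (he : Tendsto e atTop (nhds 0))
    (h : ∀ n : ℕ, 1 ≤ n →
      (α / n) * (1 + e n) ≤ ((a (n + 1) : ℝ) - a n) / (a (n + 1) : ℝ)) :
    limsup (fun n : ℕ => Real.log n / Real.log (a n)) atTop ≤ 1 / α := by
  have hα0 : (0:ℝ) < α := lt_of_lt_of_le one_pos hα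
  -- coboundedness : the sequence is eventually at most 1
  have hcob : IsCoboundedUnder (· ≤ ·) atTop
      (fun n : ℕ => Real.log n / Real.log (a n)) := by
    apply isCoboundedUnder_le_of_eventually_le (x := 0) atTop
    filter_upwards [eventually_ge_atTop 1] with n hn
    have h1 : (0:ℝ) ≤ Real.log n := Real.log_nonneg (by exact_mod_cast hn)
    have h2 : (0:ℝ) ≤ Real.log (a n) := Real.log_nonneg (by exact_mod_cast hpos n)
    exact div_nonneg h1 h2
  apply le_of_forall_pos_le_add
  intro ε hε
  set c : ℝ := α / (1 + α * ε / 2) with hc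
  have hden : (0:ℝ) < 1 + α * ε / 2 := by positivity
  have hc0 : 0 < c := by positivity
  have hcα : c < α := by
    rw [hc, div_lt_iff₀ hden]
    nlinarith [mul_pos (mul_pos hα0 hα0) hε]
  have hcinv : 1 / c = 1 / α + ε / 2 := by
    rw [hc]; field_simp
  -- choose N with the eventual lower bound α(1+e n) ≥ c
  have hev : ∀ᶠ n in atTop, c ≤ α * (1 + e n) := by
    have ht : Tendsto (fun n => α * (1 + e n)) atTop (nhds α) := by
      have h0 : Tendsto (fun n => (1:ℝ) + e n) atTop (nhds 1) := by
        simpa using (tendsto_const_nhds (x := (1:ℝ)) (f := atTop)).add he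
      simpa using h0.const_mul α
    exact ht.eventually (eventually_ge_nhds hcα)
  obtain ⟨N0, hN0⟩ := eventually_atTop.mp hev
  set N := max N0 1 with hNdef
  have hN1 : 1 ≤ N := le_max_right _ _
  have hN : ∀ n ≥ N, c ≤ α * (1 + e n) := fun n hn =>
    hN0 n (le_trans (le_max_left _ _) hn)
  set K : ℝ := Real.log (a N) - c * Real.log N with hK
  -- key induction : log (a n) ≥ c log n + K for n ≥ N
  have key : ∀ n, N ≤ n → c * Real.log n + K ≤ Real.log (a n) := by
    intro n hn
    induction n, hn using Nat.le_induction with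
    | base => rw [hK]; linarith
    | succ n hn ih =>
      have hn1 : 1 ≤ n := le_trans hN1 hn
      have hA : (0:ℝ) < (a n : ℝ) := by exact_mod_cast hpos n
      have hB : (0:ℝ) < (a (n+1) : ℝ) := by exact_mod_cast hpos (n+1)
      have hAB : (a n : ℝ) < (a (n+1) : ℝ) := by
        exact_mod_cast hmono (Nat.lt_succ_self n)
      have hnR : (0:ℝ) < (n:ℝ) := by exact_mod_cast hn1
      set g : ℝ := ((a (n + 1) : ℝ) - a n) / (a (n + 1) : ℝ) with hg
      have hg1 : c / (n:ℝ) ≤ g := by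
        refine le_trans ?_ (h n hn1)
        rw [div_mul_eq_mul_div]
        gcongr
        exact hN n hn
      -- log (a (n+1)) - log (a n) ≥ g
      have hstep : Real.log (a n) + g ≤ Real.log (a (n+1)) := by
        have hratio : (a n : ℝ) / (a (n+1) : ℝ) = 1 - g := by
          rw [hg]; field_simp; ring
        have hexp : (a n : ℝ) / (a (n+1) : ℝ) ≤ Real.exp (-g) := by
          rw [hratio]
          linarith [Real.add_one_le_exp (-g)]
        have hlog : Real.log ((a n : ℝ) / (a (n+1) : ℝ)) ≤ -g :=
          (Real.log_le_iff_le_exp (by positivity)).mpr hexp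
        rw [Real.log_div (ne_of_gt hA) (ne_of_gt hB)] at hlog
        linarith
      -- c (log (n+1) - log n) ≤ c / n
      have hcast : ((n+1:ℕ):ℝ) = (n:ℝ)+1 := by push_cast; ring
      have hlogstep : c * Real.log ((n:ℝ)+1) ≤ c * Real.log n + c / n := by
        have h1 : Real.log (((n:ℝ)+1) / n) ≤ 1 / n := by
          have h0 := Real.log_le_sub_one_of_pos (x := ((n:ℝ)+1)/n) (by positivity)
          have h2 : ((n:ℝ)+1)/n - 1 = 1 / n := by field_simp; ring
          linarith
        rw [Real.log_div (by positivity) (ne_of_gt hnR)] at h1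
        have h3 : c * (Real.log ((n:ℝ)+1) - Real.log n) ≤ c * (1/n) :=
          mul_le_mul_of_nonneg_left h1 hc0.le
        have h4 : c * (1/n) = c / n := by ring
        linarith
      rw [hcast]
      calc c * Real.log ((n:ℝ)+1) + K ≤ c * Real.log n + c / n + K := by linarith
        _ ≤ Real.log (a n) + c / n := by linarith
        _ ≤ Real.log (a n) + g := by linarith
        _ ≤ Real.log (a (n+1)) := hstep
  -- the comparison sequence tends to 1/c
  have hlogtop : Tendsto (fun n : ℕ => Real.log n) atTop atTop :=
    Real.tendsto_log_atTop.comp tendsto_natCast_atTop_atTop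
  have htend : Tendsto (fun n : ℕ => 1 / (c + K / Real.log n)) atTop (nhds (1/c)) := by
    have h0 : Tendsto (fun n : ℕ => K / Real.log n) atTop (nhds 0) :=
      tendsto_const_nhds.div_atTop hlogtop
    have h1 : Tendsto (fun n : ℕ => c + K / Real.log n) atTop (nhds c) := by
      simpa using tendsto_const_nhds.add h0
    simpa [one_div] using h1.inv₀ (ne_of_gt hc0)
  have hposden : ∀ᶠ n : ℕ in atTop, 0 < c * Real.log n + K := by
    have ht : Tendsto (fun n : ℕ => c * Real.log n + K) atTop atTop :=
      tendsto_atTop_add_const_right atTop K (hlogtop.const_mul_atTop hc0)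
    exact ht.eventually_gt_atTop 0
  have hlt : ∀ᶠ n : ℕ in atTop, 1 / (c + K / Real.log n) ≤ 1/c + ε/2 :=
    htend.eventually (eventually_le_nhds (by linarith))
  apply limsup_le_of_le hcob
  filter_upwards [hposden, hlt, eventually_ge_atTop N, eventually_ge_atTop 2]
    with n hpd hl hnN hn2
  have hlogn : (0:ℝ) < Real.log n :=
    Real.log_pos (by exact_mod_cast hn2)
  have hkey := key n hnN
  have h1 : Real.log n / Real.log (a n) ≤ Real.log n / (c * Real.log n + K) :=
    div_le_div_of_nonneg_left hlogn.le hpd hkey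
  have h2 : Real.log n / (c * Real.log n + K) = 1 / (c + K / Real.log n) := by
    field_simp
  calc Real.log n / Real.log (a n) ≤ 1 / (c + K / Real.log n) := by rw [← h2]; exact h1
    _ ≤ 1/c + ε/2 := hl
    _ = 1/α + ε := by rw [hcinv]; ring
end

section
/- Let β ≥ 1 be real. If there exists a sequence (f_n) tending to 0 such that for all n ≥ 1, (a_{n+1}-a_n)/a_{n+1} ≤ (β/n)(1+f_n), then liminf_{n→∞} (log n)/(log a_n) ≥ 1/β. -/
open Filter

/-- Telescoping lemma: one-step log increments bounded by `c` times log increments of `n`. -/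
lemma telescope_log {g t : ℕ → ℝ} {c : ℝ} {N : ℕ}
    (hstep : ∀ n, N ≤ n → g (n + 1) - g n ≤ c * (t (n + 1) - t n)) :
    ∀ n, N ≤ n → g n ≤ g N + c * (t n - t N) := by
  intro n hn
  induction n, hn using Nat.le_induction with
  | base => simp
  | succ n hn ih =>
      have := hstep n hn
      linarith

/-- If `gₙ/aₙ₊₁ ≤ (β/n)(1+fₙ)` for all `n ≥ 1` with `fₙ → 0` and `β ≥ 1`, then
the lower exponential density of `A` is at least `1/β`. -/
theorem lower_density_ge_of_gap_upper_bound (a : ℕ → ℕ) (hmono : StrictMono a)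
    (hpos : ∀ n, 0 < a n) (β : ℝ) (hβ : 1 ≤ β) (f : ℕ → ℝ)
    (hf : Tendsto f atTop (nhds 0))
    (h : ∀ n : ℕ, 1 ≤ n →
      ((a (n + 1) : ℝ) - a n) / (a (n + 1) : ℝ) ≤ (β / n) * (1 + f n)) :
    1 / β ≤ liminf (fun n : ℕ => Real.log n / Real.log (a n)) atTop := by
  set u : ℕ → ℝ := fun n : ℕ => Real.log n / Real.log (a n) with hu_def
  have hβ0 : (0:ℝ) < β := lt_of_lt_of_le one_pos hβ
  -- basic facts about `a`
  have ha_ge : ∀ n, n ≤ a n := fun n => hmono.le_apply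
  have ha_log_pos : ∀ n, 2 ≤ n → 0 < Real.log (a n) := by
    intro n hn
    have : (2:ℕ) ≤ a n := le_trans hn (ha_ge n)
    have : (1:ℝ) < (a n : ℝ) := by exact_mod_cast lt_of_lt_of_le one_lt_two (by exact_mod_cast this)
    exact Real.log_pos this
  have ha_log_2 : ∀ n, 1 ≤ n → 0 < Real.log (a n) := by
    intro n hn
    have h1 : 2 ≤ a n := by
      have := hmono (show 0 < n from hn)
      have h0 := hpos 0
      omega
    have : (1:ℝ) < (a n : ℝ) := by exact_mod_cast lt_of_lt_of_le one_lt_two (by exact_mod_cast h1)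
    exact Real.log_pos this
  -- u is eventually ≤ 1, giving coboundedness
  have hub : ∀ᶠ n in atTop, u n ≤ 1 := by
    filter_upwards [eventually_ge_atTop 1] with n hn
    have hlogn : Real.log n ≤ Real.log (a n) := by
      apply Real.log_le_log (by exact_mod_cast hn)
      exact_mod_cast ha_ge n
    exact div_le_one_of_le₀ hlogn (le_of_lt (ha_log_2 n hn))
  have hcob : IsCoboundedUnder (· ≥ ·) atTop u :=
    (isBoundedUnder_of_eventually_le hub).isCoboundedUnder_ge
  -- main step: for every c > β, 1/c ≤ liminf
  have H : ∀ c : ℝ, β < c → 1 / c ≤ liminf u atTop := by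
    intro c hc
    have hc0 : (0:ℝ) < c := lt_trans hβ0 hc
    -- the key eventual inequality
    have hT : Tendsto (fun n : ℕ => β * (1 + f n) * (1 + 1 / (n:ℝ))
        + c * β * (1 + f n) * (1 / (n:ℝ))) atTop (nhds β) := by
      have h1 : Tendsto (fun n : ℕ => (1:ℝ) + f n) atTop (nhds 1) := by
        simpa using (tendsto_const_nhds (x := (1:ℝ))).add hf
      have h2 : Tendsto (fun n : ℕ => (1:ℝ) / (n:ℝ)) atTop (nhds 0) :=
        tendsto_one_div_atTop_nhds_zero_nat
      have h3 : Tendsto (fun n : ℕ => (1:ℝ) + 1/(n:ℝ)) atTop (nhds 1) := by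
        simpa using (tendsto_const_nhds (x := (1:ℝ))).add h2
      have := (((tendsto_const_nhds (x := β)).mul h1).mul h3).add
        ((((tendsto_const_nhds (x := c * β)).mul h1)).mul h2)
      simpa using this
    have hev1 : ∀ᶠ n : ℕ in atTop, β * (1 + f n) * (1 + 1 / (n:ℝ))
        + c * β * (1 + f n) * (1 / (n:ℝ)) < c := hT.eventually_lt_const hc
    have hev2 : ∀ᶠ n : ℕ in atTop, (0:ℝ) ≤ 1 + f n := by
      filter_upwards [hf.eventually (eventually_gt_nhds (show (-1:ℝ)/2 < 0 by norm_num))] with n hn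
      linarith
    have hev3 : ∀ᶠ n : ℕ in atTop, c < (n:ℝ) :=
      tendsto_natCast_atTop_atTop.eventually_gt_atTop c
    obtain ⟨N, hN⟩ := ((hev1.and hev2).and (hev3.and (eventually_ge_atTop 1))).exists_forall_of_atTop
    -- one-step estimate for n ≥ N
    have step : ∀ n, N ≤ n →
        Real.log (a (n+1)) - Real.log (a n) ≤ c * (Real.log ((n+1 : ℕ)) - Real.log n) := by
      intro n hn
      have hcast : ((n+1:ℕ):ℝ) = (n:ℝ)+1 := by push_cast; ring
      rw [hcast]
      obtain ⟨⟨hlt, hfn⟩, hcn, hn1⟩ := hN n hn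
      have hnR : (0:ℝ) < (n:ℝ) := by exact_mod_cast hn1
      have hnR' : (0:ℝ) < (n:ℝ) + 1 := by positivity
      set F : ℝ := 1 + f n with hF
      -- key polynomial inequality
      have key : β * F * ((n:ℝ) + 1) + c * β * F ≤ c * n := by
        have e : (β * F * (1 + 1/(n:ℝ)) + c * β * F * (1/(n:ℝ))) * n
            = β * F * ((n:ℝ) + 1) + c * β * F := by
          field_simp
          try ring
        have := mul_lt_mul_of_pos_right hlt hnR
        rw [e] at this
        linarith
      set x : ℝ := β * F / n with hx
      have hx0 : 0 ≤ x := by positivity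
      have hβF : 0 ≤ β * F := by positivity
      have hx1 : x < 1 := by
        rw [hx, div_lt_one hnR]
        have h1 : β * F * ((n:ℝ)+1) ≤ c * n := by nlinarith
        have h2 : β * F < c := by
          by_contra hcon
          push_neg at hcon
          nlinarith
        linarith
      have h1x : (0:ℝ) < 1 - x := by linarith
      -- gap hypothesis
      have hgap := h n hn1
      have haA : (0:ℝ) < (a n : ℝ) := by exact_mod_cast hpos n
      have haB : (0:ℝ) < (a (n+1) : ℝ) := by exact_mod_cast hpos (n+1)
      have hxeq : (β / n) * (1 + f n) = x := by rw [hx, hF]; ring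
      rw [hxeq] at hgap
      have hfrac : 1 - x ≤ (a n : ℝ) / (a (n+1) : ℝ) := by
        have e2 : ((a (n+1) : ℝ) - a n) / (a (n+1) : ℝ) = 1 - (a n : ℝ) / (a (n+1) : ℝ) := by
          field_simp
        rw [e2] at hgap
        linarith
      -- log estimate via log x ≥ 1 - 1/x
      have hlog1 : Real.log (1 - x) ≤ Real.log ((a n : ℝ) / (a (n+1) : ℝ)) :=
        Real.log_le_log h1x hfrac
      rw [Real.log_div (ne_of_gt haA) (ne_of_gt haB)] at hlog1
      have hlog2 : 1 - (1 - x)⁻¹ ≤ Real.log (1 - x) := Real.one_sub_inv_le_log_of_pos h1x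
      have hstep1 : Real.log (a (n+1)) - Real.log (a n) ≤ (1 - x)⁻¹ - 1 := by
        push_cast
        push_cast at hlog1 hlog2
        linarith
      have hinv : (1 - x)⁻¹ - 1 = x / (1 - x) := by field_simp; ring
      -- comparison with c/(n+1)
      have hcomp : x / (1 - x) ≤ c / ((n:ℝ) + 1) := by
        rw [div_le_div_iff₀ h1x hnR']
        have e3 : x * ((n:ℝ)+1) * n = β * F * ((n:ℝ)+1) := by
          rw [hx]; field_simp; try ring
        have e4 : c * (1 - x) * n = c * n - c * (β * F) := by
          rw [hx]; field_simp; try ring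
        rw [← mul_le_mul_iff_left₀ hnR, e3, e4]
        linarith
      -- lower bound for log(n+1) - log n
      have hlogn : c / ((n:ℝ) + 1) ≤ c * (Real.log ((n:ℝ)+1) - Real.log n) := by
        have hy : (0:ℝ) < ((n:ℝ)+1) / n := by positivity
        have := Real.one_sub_inv_le_log_of_pos hy
        rw [Real.log_div (ne_of_gt hnR') (ne_of_gt hnR)] at this
        have e5 : 1 - (((n:ℝ)+1)/n)⁻¹ = 1 / ((n:ℝ)+1) := by
          rw [inv_div]
          field_simp
          ring
        rw [e5] at this
        calc c / ((n:ℝ)+1) = c * (1 / ((n:ℝ)+1)) := by ring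
          _ ≤ c * (Real.log ((n:ℝ)+1) - Real.log n) :=
            mul_le_mul_of_nonneg_left this (le_of_lt hc0)
      calc Real.log (a (n+1)) - Real.log (a n) ≤ (1 - x)⁻¹ - 1 := hstep1
        _ = x / (1 - x) := hinv
        _ ≤ c / ((n:ℝ) + 1) := hcomp
        _ ≤ c * (Real.log ((n:ℝ)+1) - Real.log n) := hlogn
    -- telescope
    have tel : ∀ n, N ≤ n → Real.log (a n) ≤ Real.log (a N)
        + c * (Real.log n - Real.log N) :=
      telescope_log (g := fun n => Real.log (a n)) (t := fun n => Real.log n) step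
    set C : ℝ := Real.log (a N) - c * Real.log N with hC
    have tel' : ∀ n, N ≤ n → Real.log (a n) ≤ c * Real.log n + C := by
      intro n hn
      have := tel n hn
      rw [hC]
      linarith
    -- comparison sequence
    set v : ℕ → ℝ := fun n : ℕ => Real.log n / (c * Real.log n + C) with hv_def
    have hloginf : Tendsto (fun n : ℕ => Real.log n) atTop atTop :=
      Real.tendsto_log_atTop.comp tendsto_natCast_atTop_atTop
    have hv : Tendsto v atTop (nhds (1/c)) := by
      have hinner : Tendsto (fun n : ℕ => (c * Real.log n + C) / Real.log n)
          atTop (nhds c) := by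
        have h0 : Tendsto (fun n : ℕ => c + C / Real.log n) atTop (nhds (c + 0)) :=
          (tendsto_const_nhds (x := c)).add ((tendsto_const_nhds (x := C)).div_atTop hloginf)
        rw [add_zero] at h0
        apply h0.congr'
        filter_upwards [hloginf.eventually_ge_atTop 1] with n hn
        have hne : Real.log n ≠ 0 := by positivity
        field_simp
      have : Tendsto (fun n : ℕ => ((c * Real.log n + C) / Real.log n)⁻¹)
          atTop (nhds c⁻¹) := hinner.inv₀ (ne_of_gt hc0)
      rw [hv_def]
      rw [one_div]
      apply this.congr
      intro n
      rw [inv_div]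
    -- liminf comparison
    have hvu : ∀ᶠ n in atTop, v n ≤ u n := by
      filter_upwards [eventually_ge_atTop (max N 1)] with n hn
      rw [max_le_iff] at hn
      obtain ⟨hnN, hn1⟩ := hn
      have h1 : 0 < Real.log (a n) := ha_log_2 n hn1
      have h2 : Real.log (a n) ≤ c * Real.log n + C := tel' n hnN
      have h3 : 0 ≤ Real.log (n:ℝ) := Real.log_natCast_nonneg n
      exact div_le_div_of_nonneg_left h3 h1 h2
    have hliminf : liminf v atTop ≤ liminf u atTop :=
      liminf_le_liminf hvu hv.isBoundedUnder_ge hcob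
    rw [hv.liminf_eq] at hliminf
    exact hliminf
  -- conclude: 1/β ≤ liminf u
  by_contra hcon
  push_neg at hcon
  set L := liminf u atTop with hL
  have hLpos : 0 < L := lt_of_lt_of_le (by positivity) (H (β + 1) (by linarith))
  have hm : L < 1 / β := hcon
  set m : ℝ := (L + 1/β) / 2 with hmdef
  have hm1 : L < m := by rw [hmdef]; linarith
  have hm2 : m < 1/β := by rw [hmdef]; linarith
  have hmpos : 0 < m := lt_trans hLpos hm1
  have hcβ : β < 1 / m := by
    rw [lt_div_iff₀ hmpos]
    have := mul_lt_mul_of_pos_left hm2 hβ0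
    rw [mul_one_div, div_self (ne_of_gt hβ0)] at this
    linarith
  have := H (1/m) hcβ
  rw [one_div_one_div] at this
  linarith
end

section
/- Let α ≥ 1 be real. If there exists a sequence (e_n) tending to 0 such that for all n ≥ 1, (a_{n+1}-a_n)/a_n ≥ (α/n)(1+e_n), then limsup_{n→∞} (log n)/(log a_n) ≤ 1/α. -/
open Filter

set_option maxHeartbeats 1600000 in
/-- If `gₙ/aₙ ≥ (α/n)(1+eₙ)` for all `n ≥ 1` with `eₙ → 0` and `α ≥ 1`, then
the upper exponential density of `A` is at most `1/α`. -/
theorem upper_density_le_of_gap_lower_bound' (a : ℕ → ℕ) (hmono : StrictMono a)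
    (hpos : ∀ n, 0 < a n) (α : ℝ) (hα : 1 ≤ α) (e : ℕ → ℝ)
    (he : Tendsto e atTop (nhds 0))
    (h : ∀ n : ℕ, 1 ≤ n →
      (α / n) * (1 + e n) ≤ ((a (n + 1) : ℝ) - a n) / (a n : ℝ)) :
    limsup (fun n : ℕ => Real.log n / Real.log (a n)) atTop ≤ 1 / α := by
  have hα0 : (0:ℝ) < α := lt_of_lt_of_le one_pos hα
  have hcob : IsCoboundedUnder (· ≤ ·) atTop
      (fun n : ℕ => Real.log n / Real.log (a n)) := by
    refine isCoboundedUnder_le_of_eventually_le atTop (x := 0) ?_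
    filter_upwards [eventually_ge_atTop 1] with n hn
    have h1 : (0:ℝ) ≤ Real.log n := Real.log_natCast_nonneg n
    have h2 : (0:ℝ) ≤ Real.log (a n) := Real.log_natCast_nonneg (a n)
    positivity
  refine le_of_forall_gt_imp_ge_of_dense fun c hc => ?_
  have hc0 : (0:ℝ) < c := lt_trans (by positivity) hc
  have hcα : 1/c < α := by
    rw [div_lt_iff₀ hc0]
    rw [div_lt_iff₀ hα0] at hc
    nlinarith
  obtain ⟨γ, hγ1, hγα⟩ : ∃ γ : ℝ, 1/c < γ ∧ γ < α := ⟨(α + 1/c)/2, by linarith, by linarith⟩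
  have hγ0 : (0:ℝ) < γ := lt_trans (by positivity) hγ1
  obtain ⟨γ', hγ'1, hγ'α⟩ : ∃ γ' : ℝ, γ < γ' ∧ γ' < α := ⟨(α + γ)/2, by linarith, by linarith⟩
  have hγ'0 : (0:ℝ) < γ' := lt_trans hγ0 hγ'1
  -- the step estimate
  have hstep : ∀ᶠ n : ℕ in atTop,
      γ * (Real.log (n+1) - Real.log n) ≤ Real.log (a (n+1)) - Real.log (a n) := by
    have hev1 : ∀ᶠ n : ℕ in atTop, γ'/α - 1 ≤ e n := by
      apply he.eventually_const_le
      have := (div_lt_one hα0).mpr hγ'α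
      linarith
    have hev2 : ∀ᶠ n : ℕ in atTop, γ'*γ/(γ'-γ) + γ + 1 ≤ (n:ℝ) :=
      tendsto_natCast_atTop_atTop.eventually_ge_atTop _
    filter_upwards [hev1, hev2] with n hen hbn
    have hfrac0 : (0:ℝ) < γ'*γ/(γ'-γ) := by
      apply div_pos (by positivity); linarith
    have hγn : γ + 1 ≤ (n:ℝ) := by linarith
    have hn1 : 1 ≤ n := by exact_mod_cast le_trans (by linarith : (1:ℝ) ≤ (n:ℝ)) le_rfl
    have hn0 : (0:ℝ) < n := by linarith
    have han : (0:ℝ) < (a n : ℝ) := by exact_mod_cast hpos n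
    have han1 : (0:ℝ) < (a (n+1) : ℝ) := by exact_mod_cast hpos (n+1)
    have hlt : (a n : ℝ) < (a (n+1) : ℝ) := by
      exact_mod_cast hmono (Nat.lt_succ_self n)
    -- from hypothesis
    have hd : γ'/n * (a n : ℝ) ≤ (a (n+1) : ℝ) - a n := by
      have h1 := h n hn1
      have h2 : γ'/n ≤ (α/n) * (1 + e n) := by
        rw [div_le_iff₀ hn0, mul_assoc, div_mul_eq_mul_div, le_div_iff₀ hn0]
        have h2' : γ' / α ≤ 1 + e n := by linarith
        have : γ' ≤ α * (1 + e n) := by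
          calc γ' = α * (γ' / α) := by field_simp
            _ ≤ α * (1 + e n) := mul_le_mul_of_nonneg_left h2' hα0.le
        nlinarith
      calc γ'/n * (a n : ℝ) ≤ ((a (n+1) : ℝ) - a n) / (a n : ℝ) * a n := by
            apply mul_le_mul_of_nonneg_right (le_trans h2 h1) han.le
        _ = (a (n+1) : ℝ) - a n := by field_simp
    -- key : γ * a (n+1) ≤ n * (a(n+1) - a n)
    have hkey : γ * (a (n+1) : ℝ) ≤ n * ((a (n+1) : ℝ) - a n) := by
      have hd' : γ' * (a n : ℝ) ≤ n * ((a (n+1) : ℝ) - a n) := by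
        have := mul_le_mul_of_nonneg_left hd hn0.le
        calc γ' * (a n : ℝ) = (n:ℝ) * (γ'/n * (a n : ℝ)) := by field_simp
          _ ≤ n * ((a (n+1) : ℝ) - a n) := this
      have hng : γ'*γ/(γ'-γ) ≤ (n:ℝ) - γ := by linarith
      have hng' : γ' * γ ≤ ((n:ℝ) - γ) * (γ' - γ) := by
        rw [div_le_iff₀ (by linarith : (0:ℝ) < γ'-γ)] at hng; linarith
      -- (n-γ) * d ≥ (n-γ) * (γ'/n) * a n ≥ γ * a n
      have h3 : γ * (a n : ℝ) ≤ ((n:ℝ) - γ) * ((a (n+1) : ℝ) - a n) := by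
        have h4 : ((n:ℝ) - γ) * (γ'/n * (a n : ℝ)) ≤ ((n:ℝ) - γ) * ((a (n+1):ℝ) - a n) :=
          mul_le_mul_of_nonneg_left hd (by linarith)
        have hq : γ * (n:ℝ) ≤ ((n:ℝ) - γ) * γ' := by nlinarith
        have h5 : γ * (a n : ℝ) ≤ ((n:ℝ) - γ) * (γ'/n * (a n : ℝ)) := by
          have heq : ((n:ℝ) - γ) * (γ'/n * (a n : ℝ)) = (((n:ℝ) - γ) * γ' * a n)/n := by
            ring
          rw [heq, le_div_iff₀ hn0]
          nlinarith [mul_le_mul_of_nonneg_right hq han.le]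
        linarith
      have hx1 : ((n:ℝ)-γ) * ((a (n+1):ℝ) - a n) =
          (n:ℝ)*((a (n+1):ℝ) - a n) - γ*((a (n+1):ℝ) - a n) := by ring
      have hx2 : γ * (a (n+1):ℝ) = γ * (a n:ℝ) + γ*((a (n+1):ℝ) - a n) := by ring
      linarith
    -- ratio bound : a n / a (n+1) ≤ (n - γ)/n
    have hratio : (a n : ℝ) / (a (n+1) : ℝ) ≤ ((n:ℝ) - γ)/n := by
      rw [div_le_div_iff₀ han1 hn0]
      have hy1 : (n:ℝ)*((a (n+1):ℝ) - a n) = (n:ℝ)*(a (n+1):ℝ) - (n:ℝ)*(a n:ℝ) := by ring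
      have hy2 : ((n:ℝ)-γ)*(a (n+1):ℝ) = (n:ℝ)*(a (n+1):ℝ) - γ*(a (n+1):ℝ) := by ring
      linarith
    -- log lower bound
    have hlog1 : 1 - (a n : ℝ) / (a (n+1) : ℝ) ≤ Real.log (a (n+1)) - Real.log (a n) := by
      have := Real.log_le_sub_one_of_pos (div_pos han han1)
      rw [Real.log_div (ne_of_gt han) (ne_of_gt han1)] at this
      linarith
    -- log upper bound for n
    have hlog2 : γ * (Real.log (n+1) - Real.log n) ≤ γ / n := by
      have h6 : Real.log ((n+1 : ℝ)/n) ≤ (n+1:ℝ)/n - 1 :=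
        Real.log_le_sub_one_of_pos (by positivity)
      rw [Real.log_div (by positivity) (ne_of_gt hn0)] at h6
      have h7 : (n+1:ℝ)/n - 1 = 1/n := by field_simp; ring
      rw [h7] at h6
      calc γ * (Real.log (n+1) - Real.log n) ≤ γ * (1/n) :=
            mul_le_mul_of_nonneg_left h6 hγ0.le
        _ = γ / n := by ring
    have hfin : γ / n ≤ 1 - (a n : ℝ) / (a (n+1) : ℝ) := by
      have : γ / n ≤ 1 - ((n:ℝ) - γ)/n := by
        rw [div_le_iff₀ hn0] at *; field_simp; linarith
      linarith
    linarith
  -- telescoping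
  obtain ⟨N, hN⟩ := (hstep.and (eventually_ge_atTop 2)).exists_forall_of_atTop
  have htel : ∀ n, N ≤ n →
      Real.log (a N) - γ * Real.log N + γ * Real.log n ≤ Real.log (a n) := by
    intro n hn
    induction n, hn using Nat.le_induction with
    | base => linarith
    | succ n hn ih =>
        have := (hN n hn).1
        push_cast
        push_cast at ih this
        linarith
  -- conclude : eventually log n / log (a n) ≤ c
  have hfinal : ∀ᶠ n : ℕ in atTop, Real.log n / Real.log (a n) ≤ c := by
    obtain ⟨C, hC⟩ : ∃ C : ℝ, C = γ * Real.log N - Real.log (a N) := ⟨_, rfl⟩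
    have hlogtop : Tendsto (fun n : ℕ => Real.log n) atTop atTop :=
      Real.tendsto_log_atTop.comp tendsto_natCast_atTop_atTop
    have hev3 : ∀ᶠ n : ℕ in atTop, C / (γ - 1/c) ≤ Real.log n :=
      hlogtop.eventually_ge_atTop _
    filter_upwards [hev3, eventually_ge_atTop (max N 2)] with n hCn hn
    have hnN : N ≤ n := le_trans (le_max_left _ _) hn
    have hn2 : 2 ≤ n := le_trans (le_max_right _ _) hn
    have hlogn : 0 < Real.log n := by
      apply Real.log_pos
      have : (2:ℝ) ≤ (n:ℝ) := by exact_mod_cast hn2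
      linarith
    have h8 : γ * Real.log n - C ≤ Real.log (a n) := by
      have := htel n hnN; rw [hC]; linarith
    have h9 : (1/c) * Real.log n ≤ Real.log (a n) := by
      have h10 : C ≤ (γ - 1/c) * Real.log n := by
        rw [div_le_iff₀ (by linarith : (0:ℝ) < γ - 1/c)] at hCn
        linarith
      have hz : (γ - 1/c) * Real.log n = γ * Real.log n - (1/c) * Real.log n := by ring
      linarith
    have hloga : 0 < Real.log (a n) := by
      calc (0:ℝ) < (1/c) * Real.log n := by positivity
        _ ≤ _ := h9
    rw [div_le_iff₀ hloga]
    calc Real.log n = c * ((1/c) * Real.log n) := by field_simp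
      _ ≤ c * Real.log (a n) := mul_le_mul_of_nonneg_left h9 hc0.le
  exact limsup_le_of_le hcob hfinal
end
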